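/- arXiv:1311.1719 — 7 statements merged into one kernel-verified Lean document; each statement's English description precedes it below -/
import Mathlib

section
/- Let κ be a cardinal and let C be a class of regular topological spaces that is regular closed hereditary, i.e., whenever X ∈ C, every nonempty regular closed subset of X (with the subspace topology) belongs to C. If every space X ∈ C with |X| = Δ(X) has a κ-resolvable subspace, then every member of C is κ-resolvable. -/
open Cardinal Set Topology

universe u

/-- A space is `lam`-resolvable if it has `lam` many pairwise disjoint dense subsets. -/
def IsLamResolvable (X : Type u) [TopologicalSpace X] (lam : Cardinal.{u}) : Prop :=
  ∃ 𝒟 : Set (Set X), #𝒟 = lam ∧ (∀ D ∈ 𝒟, Dense D) ∧ 𝒟.PairwiseDisjoint id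

/-- The dispersion character: the minimum cardinality of a nonempty open subset. -/
noncomputable def dispersion (X : Type u) [TopologicalSpace X] : Cardinal.{u} :=
  sInf {c | ∃ U : Set X, IsOpen U ∧ U.Nonempty ∧ c = #U}

/-- The extent: the supremum of the cardinalities of closed discrete subsets. -/
noncomputable def extent (X : Type u) [TopologicalSpace X] : Cardinal.{u} :=
  sSup {c | ∃ D : Set X, IsClosed D ∧ DiscreteTopology D ∧ c = #D}

/-- The derived set: the set of accumulation points of `A`. -/
def derivedPts {X : Type u} [TopologicalSpace X] (A : Set X) : Set X :=
  {x | ∀ U : Set X, IsOpen U → x ∈ U → ∃ y ∈ U ∩ A, y ≠ x}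

/-- The set of complete accumulation points of `A`. -/
def caPts {X : Type u} [TopologicalSpace X] (A : Set X) : Set X :=
  {x | ∀ U : Set X, IsOpen U → x ∈ U → #(↥(U ∩ A)) = #A}

/-- `lam`-compact: every subset of cardinality `lam` has a complete accumulation point. -/
def LamCompactSpace (X : Type u) [TopologicalSpace X] (lam : Cardinal.{u}) : Prop :=
  ∀ A : Set X, #A = lam → (caPts A).Nonempty

/-- A set is regular closed if it equals the closure of its interior. -/
def IsRegClosed {X : Type u} [TopologicalSpace X] (R : Set X) : Prop :=
  R = closure (interior R)

/-- A π-network: every nonempty open set includes a member of the family. -/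
def IsPiNetwork {X : Type u} [TopologicalSpace X] (N : Set (Set X)) : Prop :=
  ∀ U : Set X, IsOpen U → U.Nonempty → ∃ P ∈ N, P ⊆ U

/-- π-regular: the nonempty regular closed sets form a π-network. -/
def PiRegularSpace (X : Type u) [TopologicalSpace X] : Prop :=
  ∀ U : Set X, IsOpen U → U.Nonempty → ∃ R : Set X, R.Nonempty ∧ IsRegClosed R ∧ R ⊆ U

/-- The `<κ`-closure of `Y`: the union of the closures of all subsets of `Y`
of cardinality `< κ`. -/
def smallClosure {X : Type u} [TopologicalSpace X] (κ : Cardinal.{u}) (Y : Set X) : Set X :=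
  ⋃ S ∈ {S : Set X | S ⊆ Y ∧ #S < κ}, closure S

/-- `Y` is `<κ`-closed if it equals its `<κ`-closure. -/
def IsSmallClosed {X : Type u} [TopologicalSpace X] (κ : Cardinal.{u}) (Y : Set X) : Prop :=
  smallClosure κ Y = Y

/-- A chain decomposition of the set `S` of length `β`: an increasing continuous
sequence of sets with union `S` (where `0` also counts as a limit ordinal). -/
def IsChainDecomp {X : Type u} (β : Ordinal.{u}) (f : Ordinal.{u} → Set X) (S : Set X) : Prop :=
  (∀ a b : Ordinal.{u}, a ≤ b → b < β → f a ⊆ f b) ∧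
  (∀ δ : Ordinal.{u}, δ < β → (δ = 0 ∨ Order.IsSuccLimit δ) → f δ = ⋃ a ∈ Set.Iio δ, f a) ∧
  S = ⋃ a ∈ Set.Iio β, f a

/-- `H` is `κ`-approximated in `X`. -/
def IsKApproximated {X : Type u} [TopologicalSpace X] (κ : Cardinal.{u}) (H : Set X) : Prop :=
  ∃ 𝒜 : Set (Set X), #𝒜 = κ ∧ 𝒜.PairwiseDisjoint id ∧
    ∀ A ∈ 𝒜, #A = κ ∧ (∀ Y : Set X, Y ⊆ A → #Y = κ → (caPts Y).Nonempty) ∧ caPts A = H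

/-- `F` is `κ`-nice in `X`. -/
def IsKNice {X : Type u} [TopologicalSpace X] (κ : Cardinal.{u}) (F : Set X) : Prop :=
  ∃ A : Ordinal.{u} → Set X,
    (∀ a ∈ Set.Iio (Order.succ κ).ord, ∀ b ∈ Set.Iio (Order.succ κ).ord,
      a ≠ b → Disjoint (A a) (A b)) ∧
    (∀ a ∈ Set.Iio (Order.succ κ).ord, IsLamResolvable ↥(A a) κ) ∧
    F = ⋂ a ∈ Set.Iio (Order.succ κ).ord,
      closure (⋃ b ∈ Set.Ico a (Order.succ κ).ord, A b)

lemma lam_le_one_of_isEmpty {X : Type u} [TopologicalSpace X] [IsEmpty X] {κ : Cardinal.{u}}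
    (h : IsLamResolvable X κ) : κ ≤ 1 := by
  obtain ⟨𝒟, h𝒟, -, -⟩ := h
  rw [← h𝒟]
  have : 𝒟 ⊆ {(∅ : Set X)} := fun D _ => by simp [Set.eq_empty_of_isEmpty D]
  calc #𝒟 ≤ #({(∅ : Set X)} : Set (Set X)) := mk_le_mk_of_subset this
    _ = 1 := mk_singleton _


lemma isRegClosed_closure {X : Type u} [TopologicalSpace X] {V : Set X} (hV : IsOpen V) :
    IsRegClosed (closure V) := by
  apply subset_antisymm
  · exact closure_mono (hV.subset_interior_iff.mpr subset_closure)
  · exact closure_minimal interior_subset isClosed_closure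


lemma isLamResolvable_of_homeomorph {X X' : Type u} [TopologicalSpace X] [TopologicalSpace X']
    (h : X ≃ₜ X') {κ : Cardinal.{u}} (hr : IsLamResolvable X κ) : IsLamResolvable X' κ := by
  obtain ⟨𝒟, h𝒟, hdense, hdisj⟩ := hr
  refine ⟨(Set.image h) '' 𝒟, ?_, ?_, ?_⟩
  · rw [mk_image_eq (Set.image_injective.mpr h.injective), h𝒟]
  · rintro D ⟨D0, hD0, rfl⟩
    have := (hdense D0 hD0).closure_eq
    rw [dense_iff_closure_eq, ← h.image_closure, this, Set.image_univ, h.surjective.range_eq]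
  · rintro D ⟨D0, hD0, rfl⟩ E ⟨E0, hE0, rfl⟩ hne
    have : D0 ≠ E0 := fun he => hne (by rw [he])
    exact (Set.disjoint_image_iff h.injective).mpr (hdisj hD0 hE0 this)

/-- transfer resolvability of a subset of a subtype to the image in the base space -/
lemma isLamResolvable_image {Y : Type u} [TopologicalSpace Y] {R : Set Y} {Z0 : Set ↥R}
    {κ : Cardinal.{u}} (hr : IsLamResolvable ↥Z0 κ) :
    IsLamResolvable ↥(Subtype.val '' Z0 : Set Y) κ := by
  have hemb : IsEmbedding (fun z : ↥Z0 =>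
      (⟨z.1.1, ⟨z.1, z.2, rfl⟩⟩ : ↥(Subtype.val '' Z0 : Set Y))) := by
    have h1 : IsEmbedding ((Subtype.val : ↥(Subtype.val '' Z0 : Set Y) → Y) ∘
        (fun z : ↥Z0 => (⟨z.1.1, ⟨z.1, z.2, rfl⟩⟩ : ↥(Subtype.val '' Z0 : Set Y)))) := by
      have : ((Subtype.val : ↥(Subtype.val '' Z0 : Set Y) → Y) ∘
          (fun z : ↥Z0 => (⟨z.1.1, ⟨z.1, z.2, rfl⟩⟩ : ↥(Subtype.val '' Z0 : Set Y))))
          = (Subtype.val : ↥R → Y) ∘ (Subtype.val : ↥Z0 → ↥R) := rfl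
      rw [this]
      exact IsEmbedding.subtypeVal.comp IsEmbedding.subtypeVal
    exact h1.of_comp (by fun_prop) continuous_subtype_val
  have hsurj : Function.Surjective (fun z : ↥Z0 =>
      (⟨z.1.1, ⟨z.1, z.2, rfl⟩⟩ : ↥(Subtype.val '' Z0 : Set Y))) := by
    rintro ⟨y, z, hz, rfl⟩
    exact ⟨⟨z, hz⟩, rfl⟩
  have : IsHomeomorph _ := (isHomeomorph_iff_isEmbedding_surjective).mpr ⟨hemb, hsurj⟩
  exact isLamResolvable_of_homeomorph (this.homeomorph _) hr

lemma keyB {κ : Cardinal.{u}} (hκ : 2 ≤ κ)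
    (C : (Y : Type u) → [inst : TopologicalSpace Y] → Prop)
    (hher : ∀ (Y : Type u) [TopologicalSpace Y], C Y →
      ∀ R : Set Y, R.Nonempty → IsRegClosed R → C ↥R)
    (hres : ∀ (Y : Type u) [TopologicalSpace Y], C Y → #Y = dispersion Y →
      ∃ Z : Set Y, IsLamResolvable ↥Z κ)
    (Y : Type u) [TopologicalSpace Y] [RegularSpace Y] (hY : C Y)
    {U : Set Y} (hU : IsOpen U) (hUne : U.Nonempty) :
    ∃ Z : Set Y, Z ⊆ U ∧ Z.Nonempty ∧ IsLamResolvable ↥Z κ := by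
  -- regularity helper
  have hreg : ∀ (W : Set Y) (x : Y), IsOpen W → x ∈ W →
      ∃ V : Set Y, IsOpen V ∧ x ∈ V ∧ closure V ⊆ W := by
    intro W x hW hx
    obtain ⟨t, ht, htc, htW⟩ := exists_mem_nhds_isClosed_subset (hW.mem_nhds hx)
    exact ⟨interior t, isOpen_interior, mem_interior_iff_mem_nhds.mpr ht,
      (closure_minimal interior_subset htc).trans htW⟩
  set 𝒞 : Set Cardinal.{u} :=
    {c | ∃ W : Set Y, IsOpen W ∧ W.Nonempty ∧ W ⊆ U ∧ c = #(closure W)} with h𝒞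
  have h𝒞ne : 𝒞.Nonempty := ⟨#(closure U), U, hU, hUne, subset_rfl, rfl⟩
  obtain ⟨W, hW, hWne, hWU, hWμ⟩ := csInf_mem h𝒞ne
  set μ := sInf 𝒞 with hμ
  obtain ⟨x, hxW⟩ := hWne
  obtain ⟨V, hV, hxV, hVW⟩ := hreg W x hW hxW
  have hVU : V ⊆ U := (subset_closure.trans hVW).trans hWU
  have hVmem : #(closure V) ∈ 𝒞 := ⟨V, hV, ⟨x, hxV⟩, hVU, rfl⟩
  have hμV : μ = #(closure V) := le_antisymm (csInf_le (OrderBot.bddBelow _) hVmem)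
    ((mk_le_mk_of_subset (hVW.trans subset_closure)).trans_eq hWμ.symm)
  set R := closure V with hR
  have hRU : R ⊆ U := hVW.trans hWU
  have hRne : R.Nonempty := ⟨x, subset_closure hxV⟩
  haveI : Nonempty ↥R := hRne.to_subtype
  have hCR : C ↥R := hher Y hY R hRne (isRegClosed_closure hV)
  -- #R = dispersion R
  have hdisp : #↥R = dispersion ↥R := by
    apply le_antisymm
    · refine le_csInf ⟨#(univ : Set ↥R), ⟨univ, isOpen_univ, univ_nonempty, rfl⟩⟩ ?_
      rintro c ⟨O, hO, hOne, rfl⟩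
      obtain ⟨W', hW', rfl⟩ := isOpen_induced_iff.mp hO
      obtain ⟨⟨z, hzR⟩, hzW'⟩ := hOne
      have hz : z ∈ closure V := hzR
      obtain ⟨y, hyW', hyV⟩ := mem_closure_iff.mp hz W' hW' hzW'
      obtain ⟨V2, hV2, hyV2, hV2sub⟩ := hreg (W' ∩ V) y (hW'.inter hV) ⟨hyW', hyV⟩
      have hV2𝒞 : #(closure V2) ∈ 𝒞 :=
        ⟨V2, hV2, ⟨y, hyV2⟩, (subset_closure.trans hV2sub).trans (inter_subset_right.trans hVU), rfl⟩
      have h1 : μ ≤ #(closure V2) := csInf_le (OrderBot.bddBelow _) hV2𝒞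
      have h2 : #(closure V2) ≤ #(Subtype.val ⁻¹' W' : Set ↥R) := by
        have hsubR : closure V2 ⊆ R := (hV2sub.trans inter_subset_right).trans subset_closure
        have hsubW : closure V2 ⊆ W' := hV2sub.trans inter_subset_left
        exact mk_le_of_injective (f := fun z : ↥(closure V2) =>
          (⟨⟨z.1, hsubR z.2⟩, hsubW z.2⟩ : ↥(Subtype.val ⁻¹' W' : Set ↥R)))
          (fun a b hab => Subtype.ext (congrArg (fun p => p.1.1) hab))
      exact hμV.symm.trans_le (h1.trans h2)
    · exact csInf_le (OrderBot.bddBelow _) ⟨univ, isOpen_univ, univ_nonempty, (@mk_univ ↥R).symm⟩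
  obtain ⟨Z0, hZ0⟩ := hres ↥R hCR hdisp
  refine ⟨Subtype.val '' Z0, (Subtype.coe_image_subset R Z0).trans hRU, ?_, isLamResolvable_image hZ0⟩
  rcases Z0.eq_empty_or_nonempty with h | h
  · subst h
    haveI : IsEmpty ↥(∅ : Set ↥R) := by simp
    exact absurd (lam_le_one_of_isEmpty hZ0) (by
      intro hle
      exact absurd (hκ.trans hle) (by norm_num))
  · exact h.image _

/-- If `C` is a regular closed hereditary class of regular spaces and every
`X ∈ C` with `|X| = Δ(X)` has a `κ`-resolvable subspace, then every member of `C` is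
`κ`-resolvable. -/
theorem stmt7 (κ : Cardinal.{u})
    (C : (Y : Type u) → [inst : TopologicalSpace Y] → Prop)
    (hCreg : ∀ (Y : Type u) [TopologicalSpace Y], C Y → RegularSpace Y)
    (hher : ∀ (Y : Type u) [TopologicalSpace Y], C Y →
      ∀ R : Set Y, R.Nonempty → IsRegClosed R → C ↥R)
    (hres : ∀ (Y : Type u) [TopologicalSpace Y], C Y → #Y = dispersion Y →
      ∃ Z : Set Y, IsLamResolvable ↥Z κ) :
    ∀ (Y : Type u) [TopologicalSpace Y], C Y → IsLamResolvable Y κ := by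
  intro Y _ hY
  haveI := hCreg Y hY
  by_cases hκ2 : 2 ≤ κ
  swap
  · -- κ = 0 or 1
    rcases eq_or_ne κ 0 with rfl | hκ0
    · exact ⟨∅, by simp, by simp, by simp⟩
    · have hκ1 : κ = 1 := by
        have : κ ≤ 1 := by
          rw [Cardinal.two_le_iff_one_lt] at hκ2
          exact not_lt.mp hκ2
        exact le_antisymm this (Cardinal.one_le_iff_ne_zero.mpr hκ0)
      refine ⟨{(univ : Set Y)}, by rw [mk_singleton, hκ1], ?_, pairwiseDisjoint_singleton _ _⟩
      rintro D hD
      rw [mem_singleton_iff] at hD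
      rw [hD]
      exact dense_univ
  -- Y is nonempty
  by_cases hYe : IsEmpty Y
  · have hd : #Y = dispersion Y := by
      have h1 : #Y = 0 := mk_eq_zero Y
      have h2 : {c : Cardinal.{u} | ∃ U : Set Y, IsOpen U ∧ U.Nonempty ∧ c = #U} = ∅ := by
        ext c
        simp only [mem_setOf_eq, mem_empty_iff_false, iff_false]
        rintro ⟨U, -, ⟨x, -⟩, -⟩
        exact hYe.elim x
      rw [h1, dispersion, h2, Cardinal.sInf_empty]
    obtain ⟨Z, hZ⟩ := hres Y hY hd
    haveI : IsEmpty ↥Z := ⟨fun z => hYe.elim z.1⟩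
    exact absurd ((lam_le_one_of_isEmpty hZ).trans_lt (by norm_num)) (not_lt.mpr hκ2)
  rw [not_isEmpty_iff] at hYe
  -- Zorn
  set 𝒮 : Set (Set (Set Y)) :=
    {ℱ | (∀ F ∈ ℱ, F.Nonempty ∧ IsLamResolvable ↥F κ) ∧ ℱ.PairwiseDisjoint id} with h𝒮
  obtain ⟨ℳ, hℳ⟩ := zorn_subset 𝒮 (by
    intro c hc hchain
    refine ⟨⋃₀ c, ⟨?_, ?_⟩, fun s hs => subset_sUnion_of_mem hs⟩
    · rintro F ⟨ℱ, hℱ, hF⟩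
      exact (hc hℱ).1 F hF
    · rintro F ⟨ℱ1, hℱ1, hF1⟩ G ⟨ℱ2, hℱ2, hG2⟩ hne
      rcases hchain.total hℱ1 hℱ2 with h | h
      · exact (hc hℱ2).2 (h hF1) hG2 hne
      · exact (hc hℱ1).2 hF1 (h hG2) hne)
  have hℳmem : ℳ ∈ 𝒮 := hℳ.1
  -- density of the union
  have hdense0 : Dense (⋃₀ ℳ) := by
    by_contra hnd
    rw [dense_iff_closure_eq, ← ne_eq] at hnd
    have hne : (closure (⋃₀ ℳ))ᶜ.Nonempty := by
      rw [nonempty_compl]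
      exact hnd
    obtain ⟨Z, hZsub, hZne, hZres⟩ :=
      keyB hκ2 C hher hres Y hY (isClosed_closure.isOpen_compl) hne
    have hZdisj : ∀ F ∈ ℳ, Disjoint F Z := by
      intro F hF
      apply Set.disjoint_of_subset_left (subset_closure.trans ?_ : F ⊆ closure (⋃₀ ℳ))
      · exact disjoint_compl_right.mono_right hZsub
      · exact closure_mono (subset_sUnion_of_mem hF)
    have hmem : ℳ ∪ {Z} ∈ 𝒮 := by
      constructor
      · rintro F (hF | rfl)
        · exact hℳmem.1 F hF
        · exact ⟨hZne, hZres⟩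
      · rintro F (hF | rfl) G (hG | rfl) hne
        · exact hℳmem.2 hF hG hne
        · exact hZdisj F hF
        · exact (hZdisj G hG).symm
        · exact absurd rfl hne
    have : Z ∈ ℳ := hℳ.2 hmem subset_union_left (mem_union_right _ rfl)
    exact hZne.ne_empty (disjoint_self.mp (hZdisj Z this))
  -- ℳ is nonempty
  have hℳne : ℳ.Nonempty := by
    rcases ℳ.eq_empty_or_nonempty with rfl | h
    · exfalso
      obtain ⟨y⟩ := hYe
      have h1 := hdense0.closure_eq
      rw [sUnion_empty, closure_empty] at h1
      exact (Set.univ_eq_empty_iff.mp h1.symm).elim y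
    · exact h
  -- choose dense families
  have hchoice : ∀ F : ℳ, ∃ d : κ.out → Set ↥(F : Set Y),
      Function.Injective d ∧ (∀ i, Dense (d i)) ∧ (∀ i j, i ≠ j → Disjoint (d i) (d j)) := by
    rintro ⟨F, hF⟩
    obtain ⟨-, 𝒟, h𝒟, hdense, hdisj⟩ := hℳmem.1 F hF
    have : Nonempty (κ.out ≃ ↥𝒟) := Cardinal.eq.mp (by rw [mk_out, h𝒟])
    obtain ⟨e⟩ := this
    refine ⟨fun i => (e i).1, fun i j hij => e.injective (Subtype.ext hij), fun i => hdense _ (e i).2,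
      fun i j hij => hdisj (e i).2 (e j).2 (fun h => hij (e.injective (Subtype.ext h)))⟩
  choose d hdinj hddense hddisj using hchoice
  set D : κ.out → Set Y := fun i => ⋃ F : ℳ, (Subtype.val '' (d F i)) with hD
  -- each D i is dense
  have hDdense : ∀ i, Dense (D i) := by
    intro i
    have h1 : ⋃₀ ℳ ⊆ closure (D i) := by
      rintro y ⟨F, hF, hyF⟩
      have hd := hddense ⟨F, hF⟩ i
      have : (⟨y, hyF⟩ : ↥F) ∈ closure (d ⟨F, hF⟩ i) := hd _
      rw [closure_subtype] at this
      exact closure_mono (subset_iUnion (fun F : ℳ => (Subtype.val '' (d F i))) ⟨F, hF⟩) this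
    rw [dense_iff_closure_eq]
    apply eq_univ_of_univ_subset
    calc (univ : Set Y) = closure (⋃₀ ℳ) := hdense0.closure_eq.symm
      _ ⊆ closure (closure (D i)) := closure_mono h1
      _ = closure (D i) := closure_closure
  -- pairwise disjointness
  have hDdisj : ∀ i j, i ≠ j → Disjoint (D i) (D j) := by
    intro i j hij
    rw [Set.disjoint_left]
    intro x hxi hxj
    simp only [hD, mem_iUnion] at hxi hxj
    obtain ⟨F, xF, hxF, hx1⟩ := hxi
    obtain ⟨G, xG, hxG, hx2⟩ := hxj
    have hFG : F = G := by
      rcases eq_or_ne F G with h | h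
      · exact h
      · exfalso
        have hne : (F : Set Y) ≠ (G : Set Y) := fun he => h (Subtype.ext he)
        have hd2 := hℳmem.2 F.2 G.2 hne
        exact (Set.disjoint_left.mp hd2 (hx1 ▸ xF.2)) (hx2 ▸ xG.2)
    subst hFG
    have hxFG : xF = xG := Subtype.ext (hx1.trans hx2.symm)
    subst hxFG
    exact (Set.disjoint_left.mp (hddisj F i j hij) hxF) hxG
  -- D i nonempty
  have hDne : ∀ i, (D i).Nonempty := by
    intro i
    obtain ⟨F, hF⟩ := hℳne
    have hFne : (F : Set Y).Nonempty := (hℳmem.1 F hF).1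
    haveI : Nonempty ↥F := hFne.to_subtype
    obtain ⟨z, hz⟩ := (hddense ⟨F, hF⟩ i).nonempty
    exact ⟨z, mem_iUnion.mpr ⟨⟨F, hF⟩, ⟨z, hz, rfl⟩⟩⟩
  -- D injective
  have hDinj : Function.Injective D := by
    intro i j hij
    by_contra hne
    have := hDdisj i j hne
    rw [hij] at this
    exact (hDne j).ne_empty (disjoint_self.mp this)
  refine ⟨range D, ?_, ?_, ?_⟩
  · rw [mk_range_eq D hDinj, mk_out]
  · rintro _ ⟨i, rfl⟩
    exact hDdense i
  · rintro _ ⟨i, rfl⟩ _ ⟨j, rfl⟩ hne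
    exact hDdisj i j (fun h => hne (by rw [h]))
end

section
/- Let κ be a regular cardinal and X a topological space such that every subset of X of cardinality κ has an accumulation point in X (i.e., ê(X) ≤ κ). Then for every subset A of X of cardinality κ with |A'| < κ, the set A° of complete accumulation points of A is nonempty. -/
open Cardinal Set Topology

universe u

/-- If `κ` is regular and every subset of `X` of cardinality `κ` has an
accumulation point, then every `A ∈ [X]^κ` with `|A'| < κ` satisfies `A° ≠ ∅`. -/
theorem stmt9 {X : Type u} [TopologicalSpace X] (κ : Cardinal.{u}) (hκ : κ.IsRegular)
    (hext : ∀ A : Set X, #A = κ → (derivedPts A).Nonempty) :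
    ∀ A : Set X, #A = κ → #(derivedPts A) < κ → (caPts A).Nonempty := by
  intro A hA hA'
  by_contra hempty
  rw [Set.not_nonempty_iff_eq_empty] at hempty
  -- for each x ∈ A', choose open U with x ∈ U and #(U ∩ A) < κ
  have hchoice : ∀ x : derivedPts A, ∃ U : Set X, IsOpen U ∧ (x : X) ∈ U ∧ #(↥(U ∩ A)) < κ := by
    intro x
    have hx : (x : X) ∉ caPts A := by rw [hempty]; exact Set.notMem_empty _
    simp only [caPts, Set.mem_setOf_eq, not_forall] at hx
    obtain ⟨U, hU, hxU, hne⟩ := hx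
    exact ⟨U, hU, hxU, lt_of_le_of_ne (hA ▸ Cardinal.mk_le_mk_of_subset (Set.inter_subset_right)) (hA ▸ hne)⟩
  choose U hUopen hUmem hUcard using hchoice
  set C : Set X := ⋃ x : derivedPts A, U x with hC
  have hAC : #(↥(A ∩ C)) < κ := by
    have : A ∩ C = ⋃ x : derivedPts A, (U x ∩ A) := by
      ext y; simp [hC, Set.mem_iUnion, and_comm]
    rw [this]
    exact (Cardinal.card_iUnion_lt_iff_forall_of_isRegular hκ hA').2 hUcard
  set B : Set X := A \ C with hB
  have hBcard : #B = κ := by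
    have h1 : #(↥(A \ (A ∩ C))) + #(↥(A ∩ C)) = #A :=
      Cardinal.mk_diff_add_mk (Set.inter_subset_left)
    have h2 : A \ (A ∩ C) = B := by rw [Set.diff_self_inter]
    rw [h2, hA] at h1
    by_contra hne
    have hlt : #B < κ := lt_of_le_of_ne (hA ▸ Cardinal.mk_le_mk_of_subset (Set.diff_subset)) hne
    have := Cardinal.add_lt_of_lt hκ.aleph0_le hlt hAC
    rw [h1] at this
    exact lt_irrefl _ this
  obtain ⟨y, hy⟩ := hext B hBcard
  have hyA : y ∈ derivedPts A := by
    intro V hV hyV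
    obtain ⟨z, hz, hzy⟩ := hy V hV hyV
    exact ⟨z, ⟨hz.1, hz.2.1⟩, hzy⟩
  obtain ⟨z, hz, _⟩ := hy (U ⟨y, hyA⟩) (hUopen _) (hUmem _)
  exact hz.2.2 (Set.mem_iUnion.2 ⟨⟨y, hyA⟩, hz.1⟩)
end

section
/- Let κ be a regular cardinal and X a topological space such that every subset of X of cardinality κ has an accumulation point in X (i.e., ê(X) ≤ κ). If A ⊆ X has cardinality κ, |A°| < κ, and every subset B of A of cardinality κ has B° ≠ ∅, then there is a subset H ⊆ A° that is κ-approximated in X. -/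
open Cardinal Set Topology

universe u

set_option linter.unusedSectionVars false
namespace Stmt10
open scoped Classical
variable {X : Type u} [TopologicalSpace X]

theorem caPts_mono {B B' : Set X} (hsub : B ⊆ B') (hc : #B = #B') :
    caPts B ⊆ caPts B' := by
  intro x hx U hU hxU
  have h1 : #(↥(U ∩ B)) = #B := hx U hU hxU
  refine le_antisymm (mk_le_mk_of_subset inter_subset_right) ?_
  calc #B' = #(↥(U ∩ B)) := (hc ▸ h1).symm
    _ ≤ #(↥(U ∩ B')) := mk_le_mk_of_subset (inter_subset_inter_right _ hsub)

variable {A : Set X}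

def cls (r : ↥A → ↥A → Prop) (i : ↥A) : Set ↥A := {j | r i j}

def US (P : ↥A → Set X) (r : ↥A → ↥A → Prop) (i : ↥A) : Set X := ⋃ j ∈ cls r i, P j

def Valid (κ : Cardinal.{u}) (P : ↥A → Set X) (σ : (↥A → ↥A → Prop) × Set X) : Prop :=
  Equivalence σ.1 ∧ (∀ i, #(cls σ.1 i) < κ) ∧ (∀ i, σ.2 ⊆ caPts (US P σ.1 i)) ∧
    σ.2 ⊆ caPts A

def stLE (σ σ' : (↥A → ↥A → Prop) × Set X) : Prop :=
  (∀ i j, σ.1 i j → σ'.1 i j) ∧ σ.2 ⊆ σ'.2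

theorem stLE_rfl {σ : (↥A → ↥A → Prop) × Set X} : stLE σ σ := ⟨fun _ _ h => h, subset_rfl⟩

theorem stLE_trans {σ₁ σ₂ σ₃ : (↥A → ↥A → Prop) × Set X} (h1 : stLE σ₁ σ₂) (h2 : stLE σ₂ σ₃) :
    stLE σ₁ σ₃ := ⟨fun i j h => h2.1 i j (h1.1 i j h), h1.2.trans h2.2⟩

def success (κ : Cardinal.{u}) (P : ↥A → Set X) (σ : (↥A → ↥A → Prop) × Set X) : Prop :=
  ∃ I : Set ↥A, #I = κ ∧ (∀ i ∈ I, ∀ j ∈ I, i ≠ j → ¬ σ.1 i j) ∧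
    ∀ i ∈ I, caPts (US P σ.1 i) = σ.2

noncomputable def step (κ : Cardinal.{u}) (P : ↥A → Set X) (σ : (↥A → ↥A → Prop) × Set X) :
    (↥A → ↥A → Prop) × Set X :=
  if h : ∃ σ', (Valid κ P σ' ∧ stLE σ σ') ∧ σ.2 ⊂ σ'.2 then h.choose else σ

theorem step_le (κ : Cardinal.{u}) (P : ↥A → Set X) (σ : (↥A → ↥A → Prop) × Set X) :
    stLE σ (step κ P σ) := by
  unfold step
  split
  · next h => exact h.choose_spec.1.2
  · exact stLE_rfl

theorem step_valid {κ : Cardinal.{u}} {P : ↥A → Set X} {σ : (↥A → ↥A → Prop) × Set X}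
    (hv : Valid κ P σ) : Valid κ P (step κ P σ) := by
  unfold step
  split
  · next h => exact h.choose_spec.1.1
  · exact hv

noncomputable def seqS (κ : Cardinal.{u}) (P : ↥A → Set X) : Ordinal.{u} →
    (↥A → ↥A → Prop) × Set X :=
  fun δ => Ordinal.limitRecOn δ ⟨fun i j => i = j, ∅⟩
    (fun _ σ => step κ P σ)
    (fun o _ ih => ⟨fun i j => i = j ∨ ∃ β, ∃ h : β < o, (ih β h).1 i j,
       ⋃ β, ⋃ h : β < o, (ih β h).2⟩)

theorem seqS_zero (κ : Cardinal.{u}) (P : ↥A → Set X) :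
    seqS κ P 0 = ⟨fun i j => i = j, ∅⟩ := Ordinal.limitRecOn_zero _ _ _

theorem seqS_succ (κ : Cardinal.{u}) (P : ↥A → Set X) (β : Ordinal.{u}) :
    seqS κ P (Order.succ β) = step κ P (seqS κ P β) := Ordinal.limitRecOn_succ _ _ _ _

theorem seqS_limit (κ : Cardinal.{u}) (P : ↥A → Set X) {δ : Ordinal.{u}} (hδ : Order.IsSuccLimit δ) :
    seqS κ P δ = ⟨fun i j => i = j ∨ ∃ β, ∃ h : β < δ, (seqS κ P β).1 i j,
       ⋃ β, ⋃ h : β < δ, (seqS κ P β).2⟩ := Ordinal.limitRecOn_limit _ _ _ _ hδ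

theorem seqS_mono (κ : Cardinal.{u}) (P : ↥A → Set X) :
    ∀ δ β : Ordinal.{u}, β ≤ δ → stLE (seqS κ P β) (seqS κ P δ) := by
  intro δ
  induction δ using Ordinal.induction with
  | _ δ IH =>
    intro β hβ
    rcases eq_or_lt_of_le hβ with rfl | hlt
    · exact stLE_rfl
    rcases Ordinal.zero_or_succ_or_isSuccLimit δ with rfl | ⟨γ, rfl⟩ | hl
    · exact absurd hlt (by simp)
    · have hβγ : β ≤ γ := Order.lt_succ_iff.mp hlt
      have h1 := IH γ (Order.lt_succ γ) β hβγ
      rw [seqS_succ]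
      exact stLE_trans h1 (step_le κ P _)
    · rw [seqS_limit κ P hl]
      constructor
      · intro i j h; exact Or.inr ⟨β, hlt, h⟩
      · intro x hx
        exact mem_iUnion.mpr ⟨β, mem_iUnion.mpr ⟨hlt, hx⟩⟩


theorem US_card {κ : Cardinal.{u}} (hκ : κ.IsRegular) {P : ↥A → Set X}
    (hPcard : ∀ i, #(P i) = κ) {r : ↥A → ↥A → Prop} {i : ↥A} (hi : i ∈ cls r i)
    (hlt : #(cls r i) < κ) : #(US P r i) = κ := by
  refine le_antisymm ?_ ?_
  · calc #(US P r i) ≤ #(cls r i) * ⨆ j : cls r i, #(P j) := mk_biUnion_le _ _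
      _ ≤ κ * κ := mul_le_mul' hlt.le (ciSup_le' fun j => (hPcard j).le)
      _ = κ := mul_eq_self hκ.aleph0_le
  · calc κ = #(P i) := (hPcard i).symm
      _ ≤ #(US P r i) := mk_le_mk_of_subset (subset_biUnion_of_mem hi)

theorem US_subset {P : ↥A → Set X} (hPsub : ∀ i, P i ⊆ A) (r : ↥A → ↥A → Prop) (i : ↥A) :
    US P r i ⊆ A := iUnion₂_subset fun j _ => hPsub j

theorem exists_step {κ : Cardinal.{u}} (hκ : κ.IsRegular) {P : ↥A → Set X}
    (hA : #A = κ) (hca : #(caPts A) < κ)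
    (hPsub : ∀ i, P i ⊆ A) (hPcard : ∀ i, #(P i) = κ)
    (hPdisj : ∀ i j : ↥A, i ≠ j → Disjoint (P i) (P j))
    {σ : (↥A → ↥A → Prop) × Set X} (hv : Valid κ P σ) (hns : ¬ success κ P σ) :
    ∃ σ', (Valid κ P σ' ∧ stLE σ σ') ∧ σ.2 ⊂ σ'.2 := by
  obtain ⟨r, H⟩ := σ
  obtain ⟨he', hcls, hcap, hZ⟩ := hv
  have he : Equivalence r := he'
  simp only at hcls hcap hZ ⊢
  -- basic facts
  have hUScard : ∀ i, #(US P r i) = κ := fun i => US_card hκ hPcard (he.refl i) (hcls i)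
  have hUSmem : ∀ (r' : ↥A → ↥A → Prop) i, (∀ k, r' k k) → P i ⊆ US P r' i :=
    fun r' i hr => subset_biUnion_of_mem (hr i)
  have hUSca : ∀ i, caPts (US P r i) ⊆ caPts A := fun i =>
    caPts_mono (US_subset hPsub r i) ((hUScard i).trans hA.symm)
  -- quotient
  set mk : ↥A → Quot r := Quot.mk r with hmkdef
  have hexact : ∀ {i j : ↥A}, mk i = mk j → r i j := fun {i j} h =>
    (he.eqvGen_iff).mp (Quot.eq.mp h)
  have hout : ∀ q : Quot r, mk q.out = q := fun q => Quot.out_eq q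
  have hout_inj : Function.Injective (Quot.out : Quot r → ↥A) := fun q q' h => by
    rw [← hout q, ← hout q', h]
  have hQle : #(Quot r) ≤ κ := (mk_le_of_surjective (fun q => Quot.exists_rep q)).trans hA.le
  have hQcard : #(Quot r) = κ := by
    refine le_antisymm hQle ?_
    by_contra hlt
    push_neg at hlt
    have hcover : (⋃ q : Quot r, cls r q.out) = (univ : Set ↥A) := by
      apply eq_univ_of_forall
      intro i
      refine mem_iUnion.mpr ⟨mk i, ?_⟩
      exact hexact (hout (mk i))
    have hunion : #(⋃ q : Quot r, cls r q.out) < κ :=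
      (card_iUnion_lt_iff_forall_of_isRegular hκ hlt).mpr fun q => hcls _
    rw [hcover, mk_univ, hA] at hunion
    exact lt_irrefl _ hunion
  -- exact classes
  set E : Set (Quot r) := {q | caPts (US P r q.out) = H} with hEdef
  have hElt : #E < κ := by
    have hle : #E ≤ κ := (mk_le_mk_of_subset (subset_univ E)).trans_eq (by rw [mk_univ, hQcard])
    refine hle.lt_of_ne fun hEk => hns ?_
    refine ⟨Quot.out '' E, ?_, ?_, ?_⟩
    · rw [mk_image_eq hout_inj, hEk]
    · rintro i ⟨q, _, rfl⟩ j ⟨q', _, rfl⟩ hne hr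
      refine hne ?_
      have hqq : (q : Quot r) = q' := by
        rw [← hout q, ← hout q']
        exact Quot.sound hr
      rw [hqq]
    · rintro i ⟨q, hq, rfl⟩
      exact hq
  have hEc : #(↥(Eᶜ)) = κ := by
    have hle : #(↥(Eᶜ)) ≤ κ := (mk_le_mk_of_subset (subset_univ _)).trans_eq (by rw [mk_univ, hQcard])
    refine hle.lt_or_eq.resolve_left fun hlt => ?_
    have hsum := mk_sum_compl E
    rw [hQcard] at hsum
    have h2 : #(↥E) + #(↥(Eᶜ)) < κ := Cardinal.add_lt_of_lt hκ.aleph0_le hElt hlt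
    rw [hsum] at h2
    exact lt_irrefl κ h2
  -- pick witnesses of strictness
  have hzq : ∀ q : ↥(Eᶜ), ∃ z, z ∈ caPts (US P r (q.1.out)) \ H := by
    intro q
    have h1 : H ⊆ caPts (US P r q.1.out) := hcap _
    have h2 : caPts (US P r q.1.out) ≠ H := q.2
    obtain ⟨x, hx1, hx2⟩ := exists_of_ssubset (h1.ssubset_of_ne (Ne.symm h2))
    exact ⟨x, hx1, hx2⟩
  choose z hz using hzq
  set f : ↥(Eᶜ) → ↥(caPts A) := fun q => ⟨z q, hUSca _ (hz q).1⟩ with hfdef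
  -- pigeonhole
  have hfib : ∃ w : ↥(caPts A), #(f ⁻¹' {w}) = κ := by
    by_contra hno
    push_neg at hno
    have hall : ∀ w, #(f ⁻¹' {w}) < κ := by
      intro w
      have hle : #(f ⁻¹' {w}) ≤ κ := (mk_le_mk_of_subset (subset_univ _)).trans_eq
        (by rw [mk_univ, hEc])
      exact hle.lt_of_ne (hno w)
    have hcover : (⋃ w : ↥(caPts A), f ⁻¹' {w}) = (univ : Set ↥(Eᶜ)) :=
      eq_univ_of_forall fun q => mem_iUnion.mpr ⟨f q, rfl⟩
    have hunion : #(⋃ w : ↥(caPts A), f ⁻¹' {w}) < κ :=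
      (card_iUnion_lt_iff_forall_of_isRegular hκ hca).mpr hall
    rw [hcover, mk_univ, hEc] at hunion
    exact lt_irrefl _ hunion
  obtain ⟨w, hw⟩ := hfib
  have hfibne : (f ⁻¹' {w}).Nonempty := by
    rw [← nonempty_coe_sort, ← mk_ne_zero_iff, hw]
    exact hκ.pos.ne'
  obtain ⟨q0, hq0⟩ := hfibne
  have hzs_notH : (w : X) ∉ H := by
    have : f q0 = w := hq0
    have hzq0 : z q0 = (w : X) := congrArg Subtype.val this
    exact hzq0 ▸ (hz q0).2
  -- the large fiber G in Quot r
  set G : Set (Quot r) := Subtype.val '' (f ⁻¹' {w}) with hGdef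
  have hGcard : #G = κ := by rw [mk_image_eq Subtype.val_injective, hw]
  have hGprop : ∀ g ∈ G, (w : X) ∈ caPts (US P r g.out) := by
    rintro g ⟨q, hq, rfl⟩
    have : z q = (w : X) := congrArg Subtype.val (hq : f q = w)
    exact this ▸ (hz q).1
  -- embedding of the complement into G
  have hGcle : #(↥(Gᶜ)) ≤ #(↥G) := by
    rw [hGcard]
    exact (mk_le_mk_of_subset (subset_univ _)).trans_eq (by rw [mk_univ, hQcard])
  obtain ⟨φ⟩ := Cardinal.le_def _ _ |>.mp hGcle
  set m : Quot r → Quot r := fun q => if h : q ∈ G then q else (φ ⟨q, h⟩ : ↥G) with hmdef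
  have hmG : ∀ q, m q ∈ G := by
    intro q
    rw [hmdef]
    dsimp only
    split
    · assumption
    · exact (φ _).2
  have hmid : ∀ g ∈ G, m g = g := fun g hg => dif_pos hg
  -- the new state
  set r' : ↥A → ↥A → Prop := fun i j => m (mk i) = m (mk j) with hr'def
  set H' : Set X := insert (w : X) H with hH'def
  have hstep : ∀ i j, r i j → r' i j := fun i j h => congrArg m (Quot.sound h)
  have hr'refl : ∀ k, r' k k := fun k => rfl
  -- class decomposition for r'
  have hclssub1 : ∀ i : ↥A, cls r (((m (mk i)).out)) ⊆ cls r' i := by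
    intro i k hk
    show m (mk i) = m (mk k)
    have h2 : mk k = mk ((m (mk i)).out) := Quot.sound (he.symm hk)
    rw [hout] at h2
    rw [h2, hmid _ (hmG (mk i))]
  have hcls' : ∀ i, #(cls r' i) < κ := by
    intro i
    by_cases hex : ∃ q' : ↥(Gᶜ), ((φ q' : ↥G) : Quot r) = m (mk i)
    · obtain ⟨q', hq'⟩ := hex
      have hsub : cls r' i ⊆ cls r ((m (mk i)).out) ∪ cls r ((q' : Quot r).out) := by
        intro j hj
        have hj' : m (mk i) = m (mk j) := hj
        by_cases hjG : mk j ∈ G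
        · left
          have : mk j = m (mk i) := by rw [hj', hmid _ hjG]
          have : mk j = mk ((m (mk i)).out) := by rw [this, hout]
          exact he.symm (hexact this)
        · right
          have hphi : ((φ ⟨mk j, hjG⟩ : ↥G) : Quot r) = m (mk j) := by
            rw [hmdef]; dsimp only; rw [dif_neg hjG]
          have : φ ⟨mk j, hjG⟩ = φ q' := by
            apply Subtype.val_injective
            rw [hphi, ← hj', hq']
          have hmkj : mk j = (q' : Quot r) := congrArg Subtype.val (φ.injective this)
          have : mk j = mk ((q' : Quot r).out) := by rw [hmkj, hout]
          exact he.symm (hexact this)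
      calc #(cls r' i) ≤ #(cls r ((m (mk i)).out) ∪ cls r ((q' : Quot r).out) : Set ↥A) :=
            mk_le_mk_of_subset hsub
        _ ≤ #(cls r ((m (mk i)).out)) + #(cls r ((q' : Quot r).out)) := mk_union_le _ _
        _ < κ := Cardinal.add_lt_of_lt hκ.aleph0_le (hcls _) (hcls _)
    · have hsub : cls r' i ⊆ cls r ((m (mk i)).out) := by
        intro j hj
        have hj' : m (mk i) = m (mk j) := hj
        by_cases hjG : mk j ∈ G
        · have : mk j = m (mk i) := by rw [hj', hmid _ hjG]
          have : mk j = mk ((m (mk i)).out) := by rw [this, hout]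
          exact he.symm (hexact this)
        · exfalso
          refine hex ⟨⟨mk j, hjG⟩, ?_⟩
          have hphi : ((φ ⟨mk j, hjG⟩ : ↥G) : Quot r) = m (mk j) := by
            rw [hmdef]; dsimp only; rw [dif_neg hjG]
          rw [hphi, hj']
      exact (mk_le_mk_of_subset hsub).trans_lt (hcls _)
  -- caPts invariant for the new state
  have hcap' : ∀ i, H' ⊆ caPts (US P r' i) := by
    intro i
    have hUSsub1 : US P r ((m (mk i)).out) ⊆ US P r' i :=
      biUnion_subset_biUnion_left (hclssub1 i)
    have hcard1 : #(US P r ((m (mk i)).out)) = #(US P r' i) := by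
      rw [hUScard, US_card hκ hPcard (hr'refl i) (hcls' i)]
    have hmono := caPts_mono hUSsub1 hcard1
    intro x hx
    rcases hx with rfl | hxH
    · exact hmono (hGprop _ (hmG (mk i)))
    · exact hmono (hcap _ hxH)
  refine ⟨⟨r', H'⟩, ⟨⟨⟨hr'refl, fun h => h.symm, fun h1 h2 => h1.trans h2⟩, hcls', hcap', ?_⟩,
    hstep, subset_insert _ _⟩, ssubset_insert hzs_notH⟩
  · exact insert_subset w.2 hZ


theorem step_strict {κ : Cardinal.{u}} (hκ : κ.IsRegular) {P : ↥A → Set X}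
    (hA : #A = κ) (hca : #(caPts A) < κ)
    (hPsub : ∀ i, P i ⊆ A) (hPcard : ∀ i, #(P i) = κ)
    (hPdisj : ∀ i j : ↥A, i ≠ j → Disjoint (P i) (P j))
    {σ : (↥A → ↥A → Prop) × Set X} (hv : Valid κ P σ) (hns : ¬ success κ P σ) :
    σ.2 ⊂ (step κ P σ).2 := by
  have hex := exists_step hκ hA hca hPsub hPcard hPdisj hv hns
  unfold step
  rw [dif_pos hex]
  exact hex.choose_spec.2

theorem seqS_valid {κ : Cardinal.{u}} (hκ : κ.IsRegular) {P : ↥A → Set X}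
    (hPcard : ∀ i, #(P i) = κ) :
    ∀ δ : Ordinal.{u}, δ.card < κ → Valid κ P (seqS κ P δ) := by
  intro δ
  induction δ using Ordinal.induction with
  | _ δ IH =>
    intro hδ
    rcases Ordinal.zero_or_succ_or_isSuccLimit δ with rfl | ⟨γ, rfl⟩ | hl
    · rw [seqS_zero]
      refine ⟨eq_equivalence, ?_, fun i => empty_subset _, empty_subset _⟩
      intro i
      have : cls (fun i j : ↥A => i = j) i = {i} := by
        ext j; simp [cls, eq_comm]
      rw [this, mk_singleton]
      exact one_lt_aleph0.trans_le hκ.aleph0_le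
    · have hγ : γ.card < κ :=
        lt_of_le_of_lt (Ordinal.card_le_card (Order.le_succ γ)) hδ
      rw [seqS_succ]
      exact step_valid (IH γ (Order.lt_succ γ) hγ)
    · have hVβ : ∀ β, β < δ → Valid κ P (seqS κ P β) := fun β hβ =>
        IH β hβ (lt_of_le_of_lt (Ordinal.card_le_card hβ.le) hδ)
      rw [seqS_limit κ P hl]
      set r' : ↥A → ↥A → Prop :=
        fun i j => i = j ∨ ∃ β, ∃ h : β < δ, (seqS κ P β).1 i j with hr'def
      have hr'refl : ∀ k, r' k k := fun k => Or.inl rfl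
      have he' : Equivalence r' := by
        constructor
        · exact hr'refl
        · intro i j h
          rcases h with rfl | ⟨β, hβ, hr⟩
          · exact Or.inl rfl
          · exact Or.inr ⟨β, hβ, (hVβ β hβ).1.symm hr⟩
        · intro i j k h1 h2
          rcases h1 with rfl | ⟨β₁, hβ₁, hr1⟩
          · exact h2
          rcases h2 with rfl | ⟨β₂, hβ₂, hr2⟩
          · exact Or.inr ⟨β₁, hβ₁, hr1⟩
          rcases le_total β₁ β₂ with hle | hle
          · exact Or.inr ⟨β₂, hβ₂, (hVβ β₂ hβ₂).1.trans ((seqS_mono κ P β₂ β₁ hle).1 _ _ hr1) hr2⟩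
          · exact Or.inr ⟨β₁, hβ₁, (hVβ β₁ hβ₁).1.trans hr1 ((seqS_mono κ P β₁ β₂ hle).1 _ _ hr2)⟩
      have hcls' : ∀ i, #(cls r' i) < κ := by
        intro i
        have hsub : cls r' i ⊆ {i} ∪
            ⋃ x : δ.ToType, cls (seqS κ P ((Ordinal.ToType.mk (o := δ)).symm x).1).1 i := by
          intro j hj
          rcases hj with rfl | ⟨β, hβ, hr⟩
          · exact Or.inl rfl
          · refine Or.inr (mem_iUnion.mpr ⟨Ordinal.ToType.mk (o := δ) ⟨β, hβ⟩, ?_⟩)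
            simpa [cls] using hr
        refine (mk_le_mk_of_subset hsub).trans_lt ?_
        refine (mk_union_le _ _).trans_lt (Cardinal.add_lt_of_lt hκ.aleph0_le ?_ ?_)
        · rw [mk_singleton]; exact one_lt_aleph0.trans_le hκ.aleph0_le
        · refine (mk_iUnion_le _).trans_lt (Cardinal.mul_lt_of_lt hκ.aleph0_le ?_ ?_)
          · rw [Cardinal.mk_toType]; exact hδ
          · refine Cardinal.iSup_lt_of_isRegular hκ ?_ ?_
            · rw [Cardinal.mk_toType]; exact hδ
            · intro x
              exact (hVβ _ ((Ordinal.ToType.mk (o := δ)).symm x).2).2.1 i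
      refine ⟨he', hcls', ?_, ?_⟩
      · intro i x hx
        simp only [mem_iUnion] at hx
        obtain ⟨β, hβ, hxβ⟩ := hx
        have h1 : x ∈ caPts (US P (seqS κ P β).1 i) := (hVβ β hβ).2.2.1 i hxβ
        have hsub : US P (seqS κ P β).1 i ⊆ US P r' i :=
          biUnion_subset_biUnion_left (fun j hj => Or.inr ⟨β, hβ, hj⟩)
        have hc1 : #(US P (seqS κ P β).1 i) = κ :=
          US_card hκ hPcard ((hVβ β hβ).1.refl i) ((hVβ β hβ).2.1 i)
        have hc2 : #(US P r' i) = κ := US_card hκ hPcard (hr'refl i) (hcls' i)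
        exact caPts_mono hsub (hc1.trans hc2.symm) h1
      · intro x hx
        simp only [mem_iUnion] at hx
        obtain ⟨β, hβ, hxβ⟩ := hx
        exact (hVβ β hβ).2.2.2 hxβ

end Stmt10

theorem stmt10' {X : Type u} [TopologicalSpace X] (κ : Cardinal.{u}) (hκ : κ.IsRegular)
    (A : Set X) (hA : #A = κ) (hca : #(caPts A) < κ)
    (hB : ∀ B : Set X, B ⊆ A → #B = κ → (caPts B).Nonempty) :
    ∃ H : Set X, H ⊆ caPts A ∧
      ∃ 𝒜 : Set (Set X), #𝒜 = κ ∧ 𝒜.PairwiseDisjoint id ∧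
        ∀ A' ∈ 𝒜, #A' = κ ∧ (∀ Y : Set X, Y ⊆ A' → #Y = κ → (caPts Y).Nonempty) ∧
          caPts A' = H := by
  classical
  -- the pieces
  have hprod : #(↥A × ↥A) = #(↥A) := by
    rw [Cardinal.mk_prod, hA]
    simp only [Cardinal.lift_id]
    exact Cardinal.mul_eq_self hκ.aleph0_le
  obtain ⟨e⟩ := Cardinal.eq.mp hprod
  set P : ↥A → Set X := fun i => range (fun b : ↥A => ((e (i, b) : ↥A) : X)) with hPdef
  have hPsub : ∀ i, P i ⊆ A := by rintro i x ⟨b, rfl⟩; exact (e (i, b)).2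
  have hPcard : ∀ i, #(P i) = κ := by
    intro i
    have hinj : Function.Injective (fun b : ↥A => ((e (i, b) : ↥A) : X)) := by
      intro b b' hbb
      have h1 : e (i, b) = e (i, b') := Subtype.val_injective hbb
      have h2 := e.injective h1
      exact (Prod.mk.injEq _ _ _ _).mp h2 |>.2
    rw [hPdef]
    dsimp only
    rw [Cardinal.mk_range_eq _ hinj, hA]
  have hPdisj : ∀ i j : ↥A, i ≠ j → Disjoint (P i) (P j) := by
    intro i j hne
    rw [Set.disjoint_left]
    rintro x ⟨b, rfl⟩ ⟨b', hb'⟩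
    apply hne
    have h1 : e (j, b') = e (i, b) := Subtype.val_injective hb'
    have h2 := e.injective h1
    exact ((Prod.mk.injEq _ _ _ _).mp h2).1.symm
  -- the ordinal bound
  set θ : Ordinal.{u} := (Order.succ (#(caPts A))).ord with hθdef
  have hsucc_le : Order.succ (#(caPts A)) ≤ κ := Order.succ_le_of_lt hca
  have hcard_of_lt : ∀ β : Ordinal.{u}, β < θ → β.card < κ := by
    intro β hβ
    rw [hθdef, Cardinal.lt_ord] at hβ
    exact hβ.trans_le hsucc_le
  have hsucccard : ∀ β : Ordinal.{u}, β < θ → (Order.succ β).card < κ := by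
    intro β hβ
    rw [Ordinal.card_succ]
    exact Cardinal.add_lt_of_lt hκ.aleph0_le (hcard_of_lt β hβ)
      (Cardinal.one_lt_aleph0.trans_le hκ.aleph0_le)
  -- a successful stage exists
  have hex : ∃ δ, δ < θ ∧ Stmt10.success κ P (Stmt10.seqS κ P δ) := by
    by_contra hno
    push_neg at hno
    have hkey : ∀ β : θ.ToType, ∃ x : X,
        x ∈ (Stmt10.seqS κ P (Order.succ ((Ordinal.ToType.mk (o := θ)).symm β).1)).2 ∧
        x ∉ (Stmt10.seqS κ P ((Ordinal.ToType.mk (o := θ)).symm β).1).2 := by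
      intro β
      have ho : ((Ordinal.ToType.mk (o := θ)).symm β).1 < θ :=
        ((Ordinal.ToType.mk (o := θ)).symm β).2
      have hv := Stmt10.seqS_valid hκ hPcard _ (hcard_of_lt _ ho)
      have hs := Stmt10.step_strict hκ hA hca hPsub hPcard hPdisj hv (hno _ ho)
      rw [← Stmt10.seqS_succ] at hs
      obtain ⟨x, hx1, hx2⟩ := exists_of_ssubset hs
      exact ⟨x, hx1, hx2⟩
    choose pt hpt1 hpt2 using hkey
    have hptca : ∀ β, pt β ∈ caPts A := by
      intro β
      have ho : ((Ordinal.ToType.mk (o := θ)).symm β).1 < θ :=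
        ((Ordinal.ToType.mk (o := θ)).symm β).2
      have hv := Stmt10.seqS_valid hκ hPcard _ (hsucccard _ ho)
      exact hv.2.2.2 (hpt1 β)
    have key : ∀ β γ : θ.ToType,
        ((Ordinal.ToType.mk (o := θ)).symm β).1 < ((Ordinal.ToType.mk (o := θ)).symm γ).1 →
        pt β ≠ pt γ := by
      intro β γ hlt heq
      have hmono := Stmt10.seqS_mono κ P ((Ordinal.ToType.mk (o := θ)).symm γ).1
        (Order.succ ((Ordinal.ToType.mk (o := θ)).symm β).1) (Order.succ_le_of_lt hlt)
      exact hpt2 γ (heq ▸ hmono.2 (hpt1 β))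
    have hinj : Function.Injective
        (fun β : θ.ToType => (⟨pt β, hptca β⟩ : ↥(caPts A))) := by
      intro β γ h
      have h' : pt β = pt γ := congrArg Subtype.val h
      by_contra hne
      rcases lt_trichotomy β γ with hlt | heq | hgt
      · have : (Ordinal.ToType.mk (o := θ)).symm β < (Ordinal.ToType.mk (o := θ)).symm γ :=
          (OrderIso.lt_iff_lt _).mpr hlt
        exact key β γ this h'
      · exact hne heq
      · have : (Ordinal.ToType.mk (o := θ)).symm γ < (Ordinal.ToType.mk (o := θ)).symm β :=
          (OrderIso.lt_iff_lt _).mpr hgt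
        exact key γ β this h'.symm
    have hle := Cardinal.mk_le_of_injective hinj
    rw [Cardinal.mk_toType, hθdef, Cardinal.card_ord] at hle
    exact absurd hle (not_le.mpr (Order.lt_succ _))
  obtain ⟨δ, hδθ, hsucc⟩ := hex
  have hv := Stmt10.seqS_valid hκ hPcard δ (hcard_of_lt δ hδθ)
  obtain ⟨I, hIcard, hInr, hICA⟩ := hsucc
  set σ := Stmt10.seqS κ P δ with hσdef
  have hUSc : ∀ i, #(Stmt10.US P σ.1 i) = κ := fun i =>
    Stmt10.US_card hκ hPcard (hv.1.refl i) (hv.2.1 i)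
  have hUSsubA : ∀ i, Stmt10.US P σ.1 i ⊆ A := fun i => Stmt10.US_subset hPsub _ i
  have hdisj : ∀ i j : ↥A, ¬ σ.1 i j →
      Disjoint (Stmt10.US P σ.1 i) (Stmt10.US P σ.1 j) := by
    intro i j hnr
    rw [Set.disjoint_left]
    rintro x hxi hxj
    obtain ⟨a, ha, hxa⟩ := mem_iUnion₂.mp hxi
    obtain ⟨b, hb, hxb⟩ := mem_iUnion₂.mp hxj
    by_cases hab : a = b
    · subst hab
      exact hnr (hv.1.trans ha (hv.1.symm hb))
    · exact Set.disjoint_left.mp (hPdisj a b hab) hxa hxb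
  have hinjOn : Set.InjOn (fun i => Stmt10.US P σ.1 i) I := by
    intro i hi j hj heq
    by_contra hne
    have hd := hdisj i j (hInr i hi j hj hne)
    dsimp only at heq
    rw [heq] at hd
    have hempty : Stmt10.US P σ.1 j = ∅ := by
      rw [← Set.bot_eq_empty]
      exact disjoint_self.mp hd
    have := hUSc j
    rw [hempty, Cardinal.mk_emptyCollection] at this
    exact hκ.pos.ne' this.symm
  refine ⟨σ.2, hv.2.2.2, (fun i => Stmt10.US P σ.1 i) '' I, ?_, ?_, ?_⟩
  · rw [Cardinal.mk_image_eq_of_injOn _ _ hinjOn, hIcard]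
  · rintro S ⟨i, hi, rfl⟩ T ⟨j, hj, rfl⟩ hne
    have hne' : i ≠ j := fun h => hne (by rw [h])
    exact hdisj i j (hInr i hi j hj hne')
  · rintro B ⟨i, hi, rfl⟩
    exact ⟨hUSc i, fun Y hY hYc => hB Y (hY.trans (hUSsubA i)) hYc, hICA i hi⟩


/-- If `κ` is regular, every subset of `X` of cardinality `κ` has an
accumulation point, and `A ∈ [X]^κ` satisfies `|A°| < κ` and `B° ≠ ∅` for all
`B ∈ [A]^κ`, then some `H ⊆ A°` is `κ`-approximated in `X`. -/
theorem stmt10 {X : Type u} [TopologicalSpace X] (κ : Cardinal.{u}) (hκ : κ.IsRegular)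
    (hext : ∀ A : Set X, #A = κ → (derivedPts A).Nonempty)
    (A : Set X) (hA : #A = κ) (hca : #(caPts A) < κ)
    (hB : ∀ B : Set X, B ⊆ A → #B = κ → (caPts B).Nonempty) :
    ∃ H : Set X, H ⊆ caPts A ∧ IsKApproximated κ H := by
  obtain ⟨H, h1, h2⟩ := stmt10' κ hκ A hA hca hB
  exact ⟨H, h1, h2⟩
end

section
/- Let X be a topological space whose cardinality κ = |X| is a regular cardinal, and let H be a pairwise disjoint family of subsets of X, each κ-approximated in X, such that ⋃H is dense in X. Then X is κ-resolvable. -/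
open Cardinal Set Topology

universe u

/-- If `Y ⊆ A` and `#Y = #A`, then every complete accumulation point of `Y` is one of `A`. -/
lemma caPts_subset_of_subset {X : Type u} [TopologicalSpace X] {Y A : Set X}
    (hYA : Y ⊆ A) (hcard : #Y = #A) : caPts Y ⊆ caPts A := by
  intro x hx U hU hxU
  refine le_antisymm (Cardinal.mk_le_mk_of_subset Set.inter_subset_right) ?_
  calc #A = #Y := hcard.symm
    _ = #(↥(U ∩ Y)) := (hx U hU hxU).symm
    _ ≤ #(↥(U ∩ A)) := Cardinal.mk_le_mk_of_subset (Set.inter_subset_inter_right _ hYA)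

/-- If `|X| = κ` is regular and `ℋ` is a pairwise disjoint family of
`κ`-approximated subsets of `X` with dense union, then `X` is `κ`-resolvable. -/
theorem stmt11 {X : Type u} [TopologicalSpace X] (κ : Cardinal.{u})
    (hκ : κ.IsRegular) (hX : #X = κ) (ℋ : Set (Set X))
    (hdisj : ℋ.PairwiseDisjoint id)
    (happ : ∀ H ∈ ℋ, IsKApproximated κ H)
    (hdense : Dense (⋃₀ ℋ)) :
    IsLamResolvable X κ := by
  classical
  have hω : ℵ₀ ≤ κ := hκ.aleph0_le
  have hXne : Nonempty X := by
    rw [← Cardinal.mk_ne_zero_iff, hX]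
    exact hκ.pos.ne'
  -- choose the approximating families
  choose 𝒜 hAcard hAdisj hAprop using happ
  -- every member of ℋ is nonempty
  have hHne : ∀ H (hH : H ∈ ℋ), H.Nonempty := by
    intro H hH
    have h1 : (𝒜 H hH).Nonempty := by
      rw [← Set.nonempty_coe_sort, ← Cardinal.mk_ne_zero_iff, hAcard H hH]
      exact hκ.pos.ne'
    obtain ⟨A, hA⟩ := h1
    obtain ⟨hc, hcpt, hca⟩ := hAprop H hH A hA
    have := hcpt A subset_rfl hc
    rwa [hca] at this
  -- ℋ is nonempty
  obtain ⟨x0, H0, hH0, hx0⟩ := hdense.nonempty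
  -- #ℋ ≤ κ
  have hpickinj : ∃ pick : ↥ℋ → X, Function.Injective pick := by
    choose pick hpick using fun (H : ↥ℋ) => hHne H.1 H.2
    refine ⟨pick, fun H1 H2 h => ?_⟩
    by_contra hne
    have hne' : H1.1 ≠ H2.1 := fun h' => hne (Subtype.ext h')
    exact Set.disjoint_left.mp (hdisj H1.2 H2.2 hne') (hpick H1) (h ▸ hpick H2)
  obtain ⟨pick, hpick⟩ := hpickinj
  have hℋle : #(↥ℋ) ≤ κ := hX ▸ Cardinal.mk_le_of_injective hpick
  -- the index type of order type κ
  set ι := κ.ord.ToType with hι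
  have hιmk : #ι = κ := Cardinal.mk_ord_toType κ
  -- enumerate each family
  have eH : ∀ H : ↥ℋ, ι ≃ ↥(𝒜 H.1 H.2) := by
    intro H
    refine (Cardinal.eq.mp ?_).some
    rw [hιmk, hAcard H.1 H.2]
  -- enumerate all pairs
  have hP : #(↥ℋ × ι) = κ := by
    rw [Cardinal.mk_prod, Cardinal.lift_id, Cardinal.lift_id, hιmk]
    refine Cardinal.mul_eq_right hω hℋle ?_
    rw [Cardinal.mk_ne_zero_iff]
    exact ⟨⟨H0, hH0⟩⟩
  have hg : Nonempty (ι ≃ ↥ℋ × ι) := Cardinal.eq.mp (by rw [hιmk, hP])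
  obtain ⟨g⟩ := hg
  -- the indexed approximating sets
  set Af : ↥ℋ × ι → Set X := fun p => ((eH p.1) p.2 : Set X) with hAf
  have hAf_mem : ∀ p, Af p ∈ 𝒜 p.1.1 p.1.2 := fun p => ((eH p.1) p.2).2
  have hAf_card : ∀ p, #(Af p) = κ := fun p => (hAprop p.1.1 p.1.2 _ (hAf_mem p)).1
  have hAf_cpt : ∀ p, ∀ Y : Set X, Y ⊆ Af p → #Y = κ → (caPts Y).Nonempty :=
    fun p => (hAprop p.1.1 p.1.2 _ (hAf_mem p)).2.1
  have hAf_ca : ∀ p, caPts (Af p) = p.1.1 := fun p => (hAprop p.1.1 p.1.2 _ (hAf_mem p)).2.2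
  -- pairwise intersections are small
  have hAf_small : ∀ p q : ↥ℋ × ι, p ≠ q → #(↥(Af p ∩ Af q)) < κ := by
    rintro ⟨H, α⟩ ⟨H', β⟩ hpq
    by_cases hH : H = H'
    · subst hH
      have hαβ : α ≠ β := fun h => hpq (by rw [h])
      have h1 : (eH H) α ≠ (eH H) β := fun h => hαβ ((eH H).injective h)
      have h2 : ((eH H) α : Set X) ≠ ((eH H) β : Set X) :=
        fun h => h1 (Subtype.ext h)
      have hd : Disjoint (Af (H, α)) (Af (H, β)) :=
        hAdisj H.1 H.2 (hAf_mem (H, α)) (hAf_mem (H, β)) h2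
      have : Af (H, α) ∩ Af (H, β) = ∅ := Set.disjoint_iff_inter_eq_empty.mp hd
      rw [this]
      simpa using hκ.pos
    · by_contra hlt
      push_neg at hlt
      have hle : #(↥(Af (H, α) ∩ Af (H', β))) ≤ κ := hX ▸ Cardinal.mk_set_le _
      have heq : #(↥(Af (H, α) ∩ Af (H', β))) = κ := le_antisymm hle hlt
      obtain ⟨z, hz⟩ := hAf_cpt (H, α) _ Set.inter_subset_left heq
      have hz1 : z ∈ caPts (Af (H, α)) :=
        caPts_subset_of_subset Set.inter_subset_left
          (by rw [heq, hAf_card (H, α)]) hz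
      have hz2 : z ∈ caPts (Af (H', β)) :=
        caPts_subset_of_subset Set.inter_subset_right
          (by rw [heq, hAf_card (H', β)]) hz
      rw [hAf_ca (H, α)] at hz1
      rw [hAf_ca (H', β)] at hz2
      have hne' : H.1 ≠ H'.1 := fun h' => hH (Subtype.ext h')
      exact Set.disjoint_left.mp (hdisj H.2 H'.2 hne') hz1 hz2
  -- disjointify along the well-order
  set A' : ι → Set X := fun i => Af (g i) with hA'
  set B : ι → Set X := fun i => A' i \ ⋃ j ∈ Set.Iio i, A' j with hB
  have hBsub : ∀ i, B i ⊆ A' i := fun i => Set.diff_subset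
  have hBdisj : ∀ i j, i ≠ j → Disjoint (B i) (B j) := by
    have key : ∀ i j, j < i → Disjoint (B i) (B j) := by
      intro i j hji
      rw [Set.disjoint_left]
      intro x hxi hxj
      exact hxi.2 (Set.mem_biUnion hji (hBsub j hxj))
    intro i j hij
    rcases hij.lt_or_gt with h | h
    · exact (key j i h).symm
    · exact key i j h
  -- the removed part is small
  have hRsmall : ∀ i : ι, #(↥(A' i ∩ ⋃ j ∈ Set.Iio i, A' j)) < κ := by
    intro i
    have hrw : (A' i ∩ ⋃ j ∈ Set.Iio i, A' j) = ⋃ j : ↥(Set.Iio i), (A' i ∩ A' j.1) := by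
      ext x
      constructor
      · rintro ⟨hxA, hxU⟩
        obtain ⟨j, hj, hxj⟩ := Set.mem_iUnion₂.mp hxU
        exact Set.mem_iUnion.mpr ⟨⟨j, hj⟩, hxA, hxj⟩
      · rintro hx
        obtain ⟨j, hxA, hxj⟩ := Set.mem_iUnion.mp hx
        exact ⟨hxA, Set.mem_biUnion j.2 hxj⟩
    rw [hrw]
    refine (Cardinal.card_iUnion_lt_iff_forall_of_isRegular hκ
      (Cardinal.mk_Iio_ord_toType i)).mpr ?_
    intro j
    refine hAf_small (g i) (g j.1) ?_
    intro h
    exact j.2.ne' (g.injective h)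
  -- open sets with many points of A' i meet B i
  have hBU : ∀ (U : Set X), ∀ i : ι, #(↥(U ∩ A' i)) = κ → (U ∩ B i).Nonempty := by
    intro U i hcard
    by_contra hempty
    rw [Set.not_nonempty_iff_eq_empty] at hempty
    have hsub : U ∩ A' i ⊆ A' i ∩ ⋃ j ∈ Set.Iio i, A' j := by
      intro x hx
      refine ⟨hx.2, ?_⟩
      by_contra hxU
      have hxB : x ∈ U ∩ B i := ⟨hx.1, hx.2, hxU⟩
      rw [hempty] at hxB
      exact hxB
    have hle := Cardinal.mk_le_mk_of_subset hsub
    rw [hcard] at hle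
    exact absurd (hle.trans_lt (hRsmall i)) (lt_irrefl κ)
  -- each B i is nonempty
  have hBne : ∀ i : ι, (B i).Nonempty := by
    intro i
    have h1 : #(↥((Set.univ : Set X) ∩ A' i)) = κ := by
      rw [Set.univ_inter]
      exact hAf_card (g i)
    obtain ⟨x, hx⟩ := hBU Set.univ i h1
    exact ⟨x, hx.2⟩
  -- the dense sets
  set D : ι → Set X := fun α => ⋃ H : ↥ℋ, B (g.symm (H, α)) with hD
  have hDdense : ∀ α, Dense (D α) := by
    intro α
    rw [dense_iff_inter_open]
    intro U hU hUne
    obtain ⟨x, hxU, hxs⟩ := hdense.inter_open_nonempty U hU hUne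
    obtain ⟨H, hH, hxH⟩ := hxs
    set p : ↥ℋ × ι := (⟨H, hH⟩, α) with hp
    set i := g.symm p with hi
    have hA'i : A' i = Af p := by rw [hA']; simp [hi]
    have hcard : #(↥(U ∩ A' i)) = κ := by
      rw [hA'i]
      have hx' : x ∈ caPts (Af p) := by rw [hAf_ca p]; exact hxH
      rw [hx' U hU hxU, hAf_card p]
    obtain ⟨y, hy⟩ := hBU U i hcard
    exact ⟨y, Set.mem_inter hy.1 (Set.mem_iUnion.mpr ⟨⟨H, hH⟩, hy.2⟩)⟩
  have hDdisj : ∀ α β, α ≠ β → Disjoint (D α) (D β) := by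
    intro α β hab
    rw [Set.disjoint_left]
    rintro x hx hx'
    obtain ⟨H, hxB⟩ := Set.mem_iUnion.mp hx
    obtain ⟨H', hxB'⟩ := Set.mem_iUnion.mp hx'
    have hne : g.symm (H, α) ≠ g.symm (H', β) := by
      intro h
      exact hab (congrArg Prod.snd (g.symm.injective h))
    exact Set.disjoint_left.mp (hBdisj _ _ hne) hxB hxB'
  have hDinj : Function.Injective D := by
    intro α β h
    by_contra hab
    obtain ⟨x, hx⟩ := hBne (g.symm (⟨H0, hH0⟩, α))
    have hxD : x ∈ D α := Set.mem_iUnion.mpr ⟨⟨H0, hH0⟩, hx⟩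
    have hxD' : x ∈ D β := h ▸ hxD
    exact Set.disjoint_left.mp (hDdisj α β hab) hxD hxD'
  refine ⟨Set.range D, ?_, ?_, ?_⟩
  · rw [Cardinal.mk_range_eq D hDinj, hιmk]
  · rintro S ⟨α, rfl⟩
    exact hDdense α
  · rintro S ⟨α, rfl⟩ T ⟨β, rfl⟩ hST
    exact hDdisj α β (fun h => hST (by rw [h]))
end

section
/- Let κ ≤ λ be infinite cardinals with κ regular, and let X be a topological space with |X| = λ. Then X has a chain decomposition ⟨X_α : α < cf(λ)⟩ of length cf(λ) such that |X_α| < λ for every α < cf(λ) and, for each α < cf(λ), X_α ∩ cl_{<κ}(X \ X_α) ⊆ cl_{<κ}(X_{α+1} \ X_α), where cl_{<κ} denotes the <κ-closure. -/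
open Cardinal Set Topology

universe u

section Aux

variable {X : Type u} [TopologicalSpace X]

theorem mem_smallClosure_iff {κ : Cardinal.{u}} {Y : Set X} {x : X} :
    x ∈ smallClosure κ Y ↔ ∃ S : Set X, (S ⊆ Y ∧ #S < κ) ∧ x ∈ closure S := by
  simp [smallClosure]

open scoped Classical in
/-- A chosen witness set for membership in a small closure. -/
noncomputable def auxWit (κ : Cardinal.{u}) (A : Set X) (x : X) : Set X :=
  if h : ∃ S : Set X, (S ⊆ Set.univ \ A ∧ #S < κ) ∧ x ∈ closure S then h.choose else ∅

theorem auxWit_card {κ : Cardinal.{u}} (hκ : ℵ₀ ≤ κ) (A : Set X) (x : X) :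
    #(auxWit κ A x) < κ := by
  unfold auxWit
  split
  next h => exact h.choose_spec.1.2
  next => simpa using aleph0_pos.trans_le hκ

theorem auxWit_spec {κ : Cardinal.{u}} {A : Set X} {x : X}
    (h : x ∈ smallClosure κ (Set.univ \ A)) :
    auxWit κ A x ⊆ Set.univ \ A ∧ x ∈ closure (auxWit κ A x) := by
  rw [mem_smallClosure_iff] at h
  rw [auxWit, dif_pos h]
  exact ⟨h.choose_spec.1.1, h.choose_spec.2⟩

/-- One step of the construction: add the cover set `g a` and witnesses. -/
noncomputable def auxStep (κ : Cardinal.{u}) (g : Ordinal.{u} → Set X)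
    (a : Ordinal.{u}) (A : Set X) : Set X :=
  A ∪ g a ∪ ⋃ x ∈ A ∩ smallClosure κ (Set.univ \ A), auxWit κ A x

/-- The chain, defined by transfinite recursion. -/
noncomputable def auxF (κ : Cardinal.{u}) (g : Ordinal.{u} → Set X)
    (o : Ordinal.{u}) : Set X :=
  Ordinal.limitRecOn o ∅ (fun a A => auxStep κ g a A)
    (fun o _ ih => ⋃ a : Set.Iio o, ih a a.2)

theorem auxF_zero (κ : Cardinal.{u}) (g : Ordinal.{u} → Set X) : auxF κ g 0 = ∅ :=
  Ordinal.limitRecOn_zero _ _ _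

theorem auxF_succ (κ : Cardinal.{u}) (g : Ordinal.{u} → Set X) (a : Ordinal.{u}) :
    auxF κ g (Order.succ a) = auxStep κ g a (auxF κ g a) :=
  Ordinal.limitRecOn_succ _ _ _ _

theorem auxF_limit (κ : Cardinal.{u}) (g : Ordinal.{u} → Set X) {o : Ordinal.{u}}
    (h : Order.IsSuccLimit o) : auxF κ g o = ⋃ a ∈ Set.Iio o, auxF κ g a := by
  rw [Set.biUnion_eq_iUnion]
  exact Ordinal.limitRecOn_limit _ _ _ _ h

theorem auxF_mono (κ : Cardinal.{u}) (g : Ordinal.{u} → Set X) :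
    ∀ b a : Ordinal.{u}, a ≤ b → auxF κ g a ⊆ auxF κ g b := by
  intro b
  induction b using Ordinal.limitRecOn with
  | zero =>
    intro a ha
    rw [nonpos_iff_eq_zero.1 ha]
  | add_one b ih =>
    rw [Ordinal.add_one_eq_succ]
    intro a ha
    rcases (Order.le_succ_iff_eq_or_le.1 ha) with rfl | ha
    · rfl
    · refine (ih a ha).trans ?_
      rw [auxF_succ]
      exact fun x hx => Or.inl (Or.inl hx)
  | limit b hb ih =>
    intro a ha
    rcases eq_or_lt_of_le ha with rfl | ha
    · rfl
    · rw [auxF_limit κ g hb]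
      exact fun x hx => Set.mem_biUnion ha hx

end Aux
section Aux2

variable {X : Type u} [TopologicalSpace X]

omit [TopologicalSpace X] in
theorem aux_cover (lam : Cardinal.{u}) (hlam : ℵ₀ ≤ lam) (hX : #X = lam) :
    ∃ g : Ordinal.{u} → Set X, (∀ a, #(g a) < lam) ∧
      ∀ x : X, ∃ a < lam.ord.cof.ord, x ∈ g a := by
  classical
  have hXe : #X = #lam.ord.ToType := by rw [Cardinal.mk_toType, Cardinal.card_ord, hX]
  obtain ⟨e⟩ := Cardinal.eq.1 hXe
  obtain ⟨S, hSub, hScard⟩ := Order.exists_cof_eq (α := lam.ord.ToType)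
  rw [Ordinal.cof_toType] at hScard
  have hS2 : #lam.ord.cof.ord.ToType = #S := by
    rw [Cardinal.mk_toType, Cardinal.card_ord, hScard]
  obtain ⟨ψ⟩ := Cardinal.eq.1 hS2
  refine ⟨fun a => if h : a < lam.ord.cof.ord then
      {x | e x ≤ (ψ ((Ordinal.ToType.mk (o := _)) ⟨a, h⟩) : lam.ord.ToType)} else ∅, ?_, ?_⟩
  · intro a
    dsimp only
    split
    next h =>
      set s := (ψ ((Ordinal.ToType.mk (o := _)) ⟨a, h⟩) : lam.ord.ToType) with hs
      have h1 : #{x : X | e x ≤ s} = #(Set.Iic s) :=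
        Cardinal.mk_congr (e.subtypeEquiv fun x => Iff.rfl)
      have h2 : (Set.Iic s) = insert s (Set.Iio s) := by
        ext y; simp [le_iff_lt_or_eq, or_comm]
      rw [h1, h2]
      refine (Cardinal.mk_insert_le).trans_lt ?_
      exact Cardinal.add_lt_of_lt hlam (Cardinal.mk_Iio_ord_toType s)
        (Cardinal.one_lt_aleph0.trans_le hlam)
    next => simpa using aleph0_pos.trans_le hlam
  · intro x
    obtain ⟨s, hsS, hs⟩ := hSub (e x)
    set i := (Ordinal.ToType.mk (o := lam.ord.cof.ord)).symm (ψ.symm ⟨s, hsS⟩) with hi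
    refine ⟨i.1, i.2, ?_⟩
    dsimp only
    rw [dif_pos (show i.1 < lam.ord.cof.ord from i.2)]
    have hsi : (⟨i.1, i.2⟩ : Set.Iio lam.ord.cof.ord) = i := rfl
    rw [Set.mem_setOf_eq, hsi, hi, OrderIso.apply_symm_apply, Equiv.apply_symm_apply]
    exact hs

theorem auxF_card {κ lam : Cardinal.{u}} (hκ : κ.IsRegular) (hlam : ℵ₀ ≤ lam)
    (hkl : κ ≤ lam) {g : Ordinal.{u} → Set X} (hg : ∀ a, #(g a) < lam) :
    ∀ o : Ordinal.{u}, o < lam.ord.cof.ord → #(auxF (X := X) κ g o) < lam := by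
  intro o
  induction o using Ordinal.limitRecOn with
  | zero => intro _; rw [auxF_zero]; simpa using aleph0_pos.trans_le hlam
  | add_one a ih =>
    rw [Ordinal.add_one_eq_succ]
    intro ha
    rw [auxF_succ, auxStep]
    have hA := ih ((Order.lt_succ a).trans ha)
    set A := auxF (X := X) κ g a with hAdef
    set T := A ∩ smallClosure κ (Set.univ \ A) with hT
    have hTcard : #T < lam := (Cardinal.mk_le_mk_of_subset Set.inter_subset_left).trans_lt hA
    have hwit : ∀ x : X, #(auxWit κ A x) < κ := auxWit_card hκ.1 A
    have hB : #(⋃ x ∈ T, auxWit κ A x) < lam := by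
      refine (Cardinal.mk_biUnion_le _ _).trans_lt ?_
      refine Cardinal.mul_lt_of_lt hlam hTcard ?_
      rcases lt_or_eq_of_le hkl with h | h
      · exact (ciSup_le' (f := fun x : ↑T => #(auxWit κ A (x : X))) fun x => (hwit x.1).le).trans_lt h
      · subst h
        exact Cardinal.iSup_lt_of_isRegular hκ hTcard fun x => hwit x
    refine (Cardinal.mk_union_le _ _).trans_lt (Cardinal.add_lt_of_lt hlam
      ((Cardinal.mk_union_le _ _).trans_lt (Cardinal.add_lt_of_lt hlam hA (hg a))) hB)
  | limit o ho ih =>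
    intro hoθ
    rw [auxF_limit κ g ho]
    have hsurj : Function.Surjective
        (fun i : o.ToType => ((Ordinal.ToType.mk (o := o)).symm i : Set.Iio o)) :=
      (Ordinal.ToType.mk (o := o)).symm.surjective
    have hre : ⋃ a ∈ Set.Iio o, auxF (X := X) κ g a
        = ⋃ i : o.ToType, auxF κ g ((Ordinal.ToType.mk (o := o)).symm i : Ordinal) := by
      rw [Set.biUnion_eq_iUnion]
      exact (hsurj.iUnion_comp fun a => auxF κ g a.1).symm
    rw [hre]
    refine (Cardinal.mk_iUnion_le _).trans_lt ?_
    have hcard : #o.ToType < lam.ord.cof := by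
      rw [Cardinal.mk_toType]; exact Cardinal.lt_ord.1 hoθ
    refine Cardinal.mul_lt_of_lt hlam (hcard.trans_le (Ordinal.cof_ord_le lam)) ?_
    refine Ordinal.iSup_lt hcard fun i => ?_
    exact ih _ ((Ordinal.ToType.mk (o := o)).symm i).2
      (lt_trans ((Ordinal.ToType.mk (o := o)).symm i).2 hoθ)

end Aux2
/-- If `κ ≤ λ` are infinite cardinals with `κ` regular and `|X| = λ`,
then `X` has a chain decomposition `⟨X_α : α < cf(λ)⟩` with `|X_α| < λ` and
`X_α ∩ cl_{<κ}(X \\ X_α) ⊆ cl_{<κ}(X_{α+1} \\ X_α)` for all `α < cf(λ)`. -/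
theorem stmt13 {X : Type u} [TopologicalSpace X] (κ lam : Cardinal.{u})
    (hκ : κ.IsRegular) (hlam : ℵ₀ ≤ lam) (hkl : κ ≤ lam) (hX : #X = lam) :
    ∃ f : Ordinal.{u} → Set X,
      IsChainDecomp lam.ord.cof.ord f (Set.univ : Set X) ∧
      (∀ a ∈ Set.Iio lam.ord.cof.ord, #(f a) < lam) ∧
      (∀ a ∈ Set.Iio lam.ord.cof.ord,
        f a ∩ smallClosure κ (Set.univ \ f a) ⊆ smallClosure κ (f (a + 1) \ f a)) := by
  classical
  obtain ⟨g, hgcard, hgcov⟩ := aux_cover lam hlam hX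
  have hθlim : Order.IsSuccLimit lam.ord.cof.ord :=
    Cardinal.isSuccLimit_ord (Ordinal.aleph0_le_cof.2 (Cardinal.isSuccLimit_ord hlam))
  refine ⟨auxF κ g, ⟨fun a b hab _ => auxF_mono κ g b a hab, ?_, ?_⟩, ?_, ?_⟩
  · intro δ _ h
    rcases h with rfl | h
    · rw [auxF_zero]
      ext x
      simp
    · exact auxF_limit κ g h
  · refine (Set.eq_univ_of_forall fun x => ?_).symm
    obtain ⟨a, ha, hx⟩ := hgcov x
    have hmem : x ∈ auxF κ g (Order.succ a) := by
      rw [auxF_succ]; exact Or.inl (Or.inr hx)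
    exact Set.mem_biUnion (hθlim.succ_lt ha) hmem
  · intro a ha
    exact auxF_card hκ hlam hkl hgcard a ha
  · intro a _ x hx
    obtain ⟨hxA, hxsc⟩ := hx
    obtain ⟨hsub, hcl⟩ := auxWit_spec hxsc
    rw [mem_smallClosure_iff]
    refine ⟨auxWit κ (auxF κ g a) x, ⟨?_, auxWit_card hκ.1 _ _⟩, hcl⟩
    intro y hy
    refine ⟨?_, (hsub hy).2⟩
    rw [Ordinal.add_one_eq_succ, auxF_succ]
    exact Or.inr (Set.mem_biUnion ⟨hxA, hxsc⟩ hy)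
end

section
/- Let κ ≤ λ be infinite cardinals with κ regular, and let X be a π-regular topological space with |X| = λ that is not cf(λ)-resolvable. Then there exist a nonempty regular closed subset Y of X and a chain decomposition ⟨Y_α : α < cf(λ)⟩ of Y of length cf(λ) such that |Y_α| < λ for every α < cf(λ) and Y \ Y_α is <κ-closed (in X) for every α < cf(λ). -/
open Cardinal Set Topology

universe u

namespace Stmt14Aux

variable {X : Type u} [TopologicalSpace X] {κ lam : Cardinal.{u}}

lemma mem_smallClosure_iff {Z : Set X} {x : X} :
    x ∈ smallClosure κ Z ↔ ∃ S : Set X, S ⊆ Z ∧ #S < κ ∧ x ∈ closure S := by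
  simp only [smallClosure, mem_iUnion, mem_setOf_eq, exists_prop]
  exact ⟨fun ⟨S, ⟨h1, h2⟩, h3⟩ => ⟨S, h1, h2, h3⟩, fun ⟨S, h1, h2, h3⟩ => ⟨S, ⟨h1, h2⟩, h3⟩⟩

lemma closure_subset_smallClosure {Z S : Set X} (hS : S ⊆ Z) (hc : #S < κ) :
    closure S ⊆ smallClosure κ Z :=
  fun _ hx => mem_smallClosure_iff.2 ⟨S, hS, hc, hx⟩

lemma subset_smallClosure (hκ : ℵ₀ ≤ κ) (Z : Set X) : Z ⊆ smallClosure κ Z := by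
  intro z hz
  refine mem_smallClosure_iff.2 ⟨{z}, singleton_subset_iff.2 hz, ?_, subset_closure rfl⟩
  rw [mk_singleton]
  exact one_lt_aleph0.trans_le hκ

lemma isSmallClosed_iff (hκ : ℵ₀ ≤ κ) {Z : Set X} :
    IsSmallClosed κ Z ↔ smallClosure κ Z ⊆ Z :=
  ⟨fun h => h.subset, fun h => subset_antisymm h (subset_smallClosure hκ Z)⟩

lemma IsClosed.isSmallClosed' {Z : Set X} (hZ : IsClosed Z) (hκ : ℵ₀ ≤ κ) :
    IsSmallClosed κ Z := by
  rw [isSmallClosed_iff hκ]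
  intro x hx
  obtain ⟨S, h1, _, h3⟩ := mem_smallClosure_iff.1 hx
  exact closure_minimal h1 hZ h3

lemma isSmallClosed_empty (hκ : ℵ₀ ≤ κ) : IsSmallClosed κ (∅ : Set X) :=
  IsClosed.isSmallClosed' isClosed_empty hκ

lemma isSmallClosed_smallClosure (hκ : κ.IsRegular) (Z : Set X) :
    IsSmallClosed κ (smallClosure κ Z) := by
  rw [isSmallClosed_iff hκ.aleph0_le]
  intro x hx
  obtain ⟨T, hT1, hT2, hT3⟩ := mem_smallClosure_iff.1 hx
  have hch : ∀ t : T, ∃ S : Set X, S ⊆ Z ∧ #S < κ ∧ (t : X) ∈ closure S :=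
    fun t => mem_smallClosure_iff.1 (hT1 t.2)
  choose W hW1 hW2 hW3 using hch
  have hWsmall : #(⋃ t, W t) < κ :=
    mk_iUnion_le_sum_mk.trans_lt (sum_lt_of_isRegular hκ hT2 hW2)
  have hTsub : T ⊆ closure (⋃ t, W t) := fun t ht =>
    closure_mono (subset_iUnion W ⟨t, ht⟩) (hW3 ⟨t, ht⟩)
  have : x ∈ closure (⋃ t, W t) :=
    closure_minimal hTsub isClosed_closure hT3
  exact mem_smallClosure_iff.2 ⟨⋃ t, W t, iUnion_subset hW1, hWsmall, this⟩

lemma unionG (hκ : κ.IsRegular) (hlam : ℵ₀ ≤ lam) (hkl : κ ≤ lam) {ι : Type u}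
    (g : ι → Set X) (hι : #ι < lam) (hg : ∀ i, #(g i) < κ) : #(⋃ i, g i) < lam := by
  rcases eq_or_lt_of_le hkl with rfl | hlt
  · exact mk_iUnion_le_sum_mk.trans_lt (sum_lt_of_isRegular hκ hι hg)
  · calc #(⋃ i, g i) ≤ Cardinal.sum (fun i => #(g i)) := mk_iUnion_le_sum_mk
      _ ≤ Cardinal.sum (fun _ : ι => κ) := sum_le_sum _ _ (fun i => (hg i).le)
      _ = #ι * κ := sum_const' ι κ
      _ < lam := mul_lt_of_lt hlam hι hlt

lemma claimB (hκ : κ.IsRegular) (hlam : ℵ₀ ≤ lam) {h : X}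
    (hH : ∀ C : Set X, IsSmallClosed κ C → h ∉ C → lam ≤ #(Cᶜ : Set X))
    {A : Set X} (hA : #A < lam) :
    ∃ S : Set X, #S < κ ∧ S ∩ A = ∅ ∧ h ∈ closure S := by
  by_contra hcon
  push_neg at hcon
  set C := smallClosure κ ((A ∪ {h})ᶜ) with hCdef
  have hCsc : IsSmallClosed κ C := isSmallClosed_smallClosure hκ _
  have hhC : h ∉ C := by
    intro hmem
    obtain ⟨S, hS1, hS2, hS3⟩ := mem_smallClosure_iff.1 hmem
    have hSA : S ∩ A = ∅ := by
      apply eq_empty_iff_forall_notMem.2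
      rintro y ⟨hy1, hy2⟩
      exact hS1 hy1 (mem_union_left _ hy2)
    exact hcon S hS2 hSA hS3
  have hsub : (Cᶜ : Set X) ⊆ A ∪ {h} := by
    have h1 : (A ∪ {h})ᶜ ⊆ C := subset_smallClosure hκ.aleph0_le _
    intro y hy
    by_contra hy2
    exact hy (h1 hy2)
  have hlt : #(A ∪ {h} : Set X) < lam :=
    (mk_union_le _ _).trans_lt (add_lt_of_lt hlam hA
      (by rw [mk_singleton]; exact one_lt_aleph0.trans_le hlam))
  exact absurd (hH C hCsc hhC) (not_le.2 ((mk_le_mk_of_subset hsub).trans_lt hlt))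


lemma resolvable_of_dense_heavy (hκ : κ.IsRegular) (hlam : ℵ₀ ≤ lam) (hkl : κ ≤ lam)
    (hX : #X = lam)
    (hd : ∀ U : Set X, IsOpen U → U.Nonempty →
      ∃ x ∈ U, ∀ C : Set X, IsSmallClosed κ C → x ∉ C → lam ≤ #(Cᶜ : Set X)) :
    IsLamResolvable X lam.ord.cof := by
  classical
  have hXne : Nonempty X := mk_ne_zero_iff.1 (by rw [hX]; exact (aleph0_pos.trans_le hlam).ne')
  set μ := lam.ord.cof with hμdef
  have hμ0 : ℵ₀ ≤ μ := Ordinal.aleph0_le_cof.2 (isSuccLimit_ord hlam)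
  have hμlam : μ ≤ lam := Ordinal.cof_ord_le lam
  set T := lam.ord.ToType with hTdef
  set I := μ.ord.ToType with hIdef
  have hIne : Nonempty I := Ordinal.nonempty_toType_iff.2
    (by rw [Ne, ord_eq_zero]; exact (aleph0_pos.trans_le hμ0).ne')
  set Heavy : X → Prop :=
    fun x => ∀ C : Set X, IsSmallClosed κ C → x ∉ C → lam ≤ #(Cᶜ : Set X) with hHdef
  have hHne : Nonempty {x : X // Heavy x} := by
    obtain ⟨x, _, hx⟩ := hd univ isOpen_univ univ_nonempty
    exact ⟨⟨x, hx⟩⟩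
  have hPne : Nonempty ({x : X // Heavy x} × I) := ⟨⟨hHne.some, hIne.some⟩⟩
  have hPT : #({x : X // Heavy x} × I) ≤ #T := by
    rw [mk_prod, lift_id, lift_id]
    calc #{x : X // Heavy x} * #I ≤ lam * lam := by
          apply mul_le_mul'
          · exact (mk_subtype_le _).trans hX.le
          · rw [hIdef, mk_ord_toType]; exact hμlam
      _ = lam := mul_eq_self hlam
      _ = #T := (mk_ord_toType lam).symm
  obtain ⟨emb⟩ := Cardinal.le_def _ _ |>.mp hPT
  set e : T → {x : X // Heavy x} × I := Function.invFun emb with hedef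
  have he : Function.Surjective e := Function.invFun_surjective emb.injective
  have wf : WellFounded ((· < ·) : T → T → Prop) := wellFounded_lt
  set S : T → Set X := wf.fix
    (fun t rec =>
      if hc : ∃ S₀ : Set X, #S₀ < κ ∧ S₀ ∩ (⋃ t' : ↥(Iio t), rec t'.1 t'.2) = ∅ ∧
          (e t).1.1 ∈ closure S₀
      then hc.choose else ∅) with hSdef
  have hSeq : ∀ t, S t =
      if hc : ∃ S₀ : Set X, #S₀ < κ ∧ S₀ ∩ (⋃ t' : ↥(Iio t), S t'.1) = ∅ ∧
          (e t).1.1 ∈ closure S₀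
      then hc.choose else ∅ := by
    intro t
    rw [hSdef]
    exact wf.fix_eq _ t
  have inv : ∀ t : T, #(S t) < κ ∧ (e t).1.1 ∈ closure (S t) ∧
      S t ∩ (⋃ t' : ↥(Iio t), S t'.1) = ∅ := by
    intro t
    induction t using WellFounded.induction wf with
    | _ t IH =>
      have hprev : #(⋃ t' : ↥(Iio t), S t'.1) < lam :=
        unionG hκ hlam hkl (fun t' : ↥(Iio t) => S t'.1) (mk_Iio_toType_ord_lt t)
          (fun t' => (IH t'.1 t'.2).1)
      have hex : ∃ S₀ : Set X, #S₀ < κ ∧ S₀ ∩ (⋃ t' : ↥(Iio t), S t'.1) = ∅ ∧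
          (e t).1.1 ∈ closure S₀ := by
        obtain ⟨S₀, h1, h2, h3⟩ := claimB hκ hlam (e t).1.2 hprev
        exact ⟨S₀, h1, h2, h3⟩
      rw [hSeq t, dif_pos hex]
      exact ⟨hex.choose_spec.1, hex.choose_spec.2.2, hex.choose_spec.2.1⟩
  have hdis : ∀ t t' : T, t' < t → S t ∩ S t' = ∅ := by
    intro t t' hlt
    apply eq_empty_iff_forall_notMem.2
    rintro x ⟨hx1, hx2⟩
    have : x ∈ S t ∩ (⋃ t'' : ↥(Iio t), S t''.1) :=
      ⟨hx1, mem_iUnion.2 ⟨⟨t', hlt⟩, hx2⟩⟩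
    rw [(inv t).2.2] at this
    exact this
  set D : I → Set X := fun i => ⋃ t : {t : T // (e t).2 = i}, S t.1 with hDdef
  have hSD : ∀ (t : T) (i : I), (e t).2 = i → S t ⊆ D i :=
    fun t i ht => subset_iUnion (fun t' : {t : T // (e t).2 = i} => S t'.1) ⟨t, ht⟩
  have hDne : ∀ i, (D i).Nonempty := by
    intro i
    obtain ⟨t, ht⟩ := he ⟨hHne.some, i⟩
    have h1 : (e t).1.1 ∈ closure (S t) := (inv t).2.1
    have h2 : (S t).Nonempty := by
      rcases eq_empty_or_nonempty (S t) with h | h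
      · rw [h, closure_empty] at h1; exact absurd h1 (notMem_empty _)
      · exact h
    exact h2.mono (hSD t i (by rw [ht]))
  have hDdense : ∀ i, Dense (D i) := by
    intro i
    rw [dense_iff_inter_open]
    intro U hU hUne
    obtain ⟨x, hxU, hx⟩ := hd U hU hUne
    obtain ⟨t, ht⟩ := he ⟨⟨x, hx⟩, i⟩
    have hcl : x ∈ closure (S t) := by
      have := (inv t).2.1; rw [ht] at this; exact this
    obtain ⟨y, hyU, hyS⟩ := mem_closure_iff.1 hcl U hU hxU
    exact ⟨y, hyU, hSD t i (by rw [ht]) hyS⟩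
  have hDdisj : ∀ i j, i ≠ j → Disjoint (D i) (D j) := by
    intro i j hij
    rw [Set.disjoint_left]
    intro x hxi hxj
    obtain ⟨⟨t, hti⟩, hxt⟩ := mem_iUnion.1 hxi
    obtain ⟨⟨t', htj⟩, hxt'⟩ := mem_iUnion.1 hxj
    have htt : t ≠ t' := by
      rintro rfl; exact hij (hti ▸ htj ▸ rfl)
    rcases htt.lt_or_gt with h | h
    · have hmem : x ∈ S t' ∩ S t := ⟨hxt', hxt⟩
      rw [hdis t' t h] at hmem
      exact hmem
    · have hmem : x ∈ S t ∩ S t' := ⟨hxt, hxt'⟩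
      rw [hdis t t' h] at hmem
      exact hmem
  have hDinj : Function.Injective D := by
    intro i j hij
    by_contra hne
    obtain ⟨x, hx⟩ := hDne i
    exact (hDdisj i j hne).ne_of_mem hx (hij ▸ hx) rfl
  refine ⟨Set.range D, ?_, ?_, ?_⟩
  · rw [mk_range_eq _ hDinj, hIdef, mk_ord_toType]
  · rintro A ⟨i, rfl⟩
    exact hDdense i
  · rintro A ⟨i, rfl⟩ B ⟨j, rfl⟩ hne
    exact hDdisj i j (fun h => hne (by rw [h]))


lemma trivial_chain (hκ0 : ℵ₀ ≤ κ) (hlam : ℵ₀ ≤ lam) {R : Set X}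
    (hRcl : IsClosed R) (hRsmall : #R < lam) :
    ∃ f : Ordinal.{u} → Set X,
      IsChainDecomp lam.ord.cof.ord f R ∧
      (∀ a ∈ Set.Iio lam.ord.cof.ord, #(f a) < lam) ∧
      (∀ a ∈ Set.Iio lam.ord.cof.ord, IsSmallClosed κ (R \ f a)) := by
  classical
  have hμ0 : ℵ₀ ≤ lam.ord.cof := Ordinal.aleph0_le_cof.2 (isSuccLimit_ord hlam)
  have hβlim : Order.IsSuccLimit (lam.ord.cof.ord) := isSuccLimit_ord hμ0
  refine ⟨fun a => if a = 0 then ∅ else R, ⟨?_, ?_, ?_⟩, ?_, ?_⟩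
  · intro a b hab _
    by_cases ha : a = 0
    · simp [ha]
    · have hb : b ≠ 0 := fun h => ha (le_antisymm (h ▸ hab) zero_le)
      simp [ha, hb]
  · intro δ _ hδ
    rcases hδ with rfl | hδ
    · simp
    · have hδ0 : δ ≠ 0 := hδ.pos.ne'
      show (if δ = 0 then (∅ : Set X) else R) = _
      rw [if_neg hδ0]
      apply subset_antisymm
      · intro x hx
        refine mem_biUnion (show (1 : Ordinal) ∈ Iio δ from Ordinal.one_lt_of_isSuccLimit hδ) ?_
        rw [if_neg one_ne_zero]
        exact hx
      · refine iUnion₂_subset fun a _ => ?_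
        by_cases ha : a = 0 <;> simp [ha]
  · apply subset_antisymm
    · intro x hx
      refine mem_biUnion (show (1 : Ordinal) ∈ Iio lam.ord.cof.ord from Ordinal.one_lt_of_isSuccLimit hβlim) ?_
      rw [if_neg one_ne_zero]
      exact hx
    · refine iUnion₂_subset fun a _ => ?_
      by_cases ha : a = 0 <;> simp [ha]
  · intro a _
    by_cases ha : a = 0
    · simpa [ha] using aleph0_pos.trans_le hlam
    · simpa [ha] using hRsmall
  · intro a _
    by_cases ha : a = 0
    · simpa [ha] using IsClosed.isSmallClosed' hRcl hκ0
    · simpa [ha] using isSmallClosed_empty hκ0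


noncomputable def rk {o : Ordinal.{u}} (t : o.ToType) : Ordinal.{u} :=
  ((Ordinal.ToType.mk (o := o)).symm t).1

lemma rk_lt_self {o : Ordinal.{u}} (t : o.ToType) : rk t < o :=
  ((Ordinal.ToType.mk (o := o)).symm t).2

lemma rk_lt_rk {o : Ordinal.{u}} {a b : o.ToType} : rk a < rk b ↔ a < b := by
  rw [rk, rk, Subtype.coe_lt_coe]
  exact (Ordinal.ToType.mk (o := o)).symm.lt_iff_lt

lemma rk_eq {o : Ordinal.{u}} (a : Ordinal.{u}) (h : a < o) :
    rk (Ordinal.ToType.mk (o := o) ⟨a, h⟩) = a := by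
  rw [rk, OrderIso.symm_apply_apply]

lemma rk_surj {o o' : Ordinal.{u}} (h : o' < o) : ∃ t : o.ToType, rk t = o' :=
  ⟨Ordinal.ToType.mk (o := o) ⟨o', h⟩, rk_eq o' h⟩

lemma mk_rk_lt {c : Cardinal.{u}} (t₀ : c.ord.ToType) :
    #{t : c.ord.ToType // rk t < rk t₀} < c := by
  have h : #{t : c.ord.ToType // rk t < rk t₀} ≤ #(Iio t₀) :=
    mk_le_mk_of_subset (fun t ht => rk_lt_rk.1 ht)
  exact h.trans_lt (mk_Iio_toType_ord_lt t₀)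

lemma main_chain (hκ : κ.IsRegular) (hlam : ℵ₀ ≤ lam) (hkl : κ ≤ lam) {R : Set X}
    (hRcl : IsClosed R) (hRcard : #R = lam)
    (hlight : ∀ x ∈ R, ∃ C : Set X, IsSmallClosed κ C ∧ x ∉ C ∧ #(Cᶜ : Set X) < lam) :
    ∃ f : Ordinal.{u} → Set X,
      IsChainDecomp lam.ord.cof.ord f R ∧
      (∀ a ∈ Set.Iio lam.ord.cof.ord, #(f a) < lam) ∧
      (∀ a ∈ Set.Iio lam.ord.cof.ord, IsSmallClosed κ (R \ f a)) := by
  classical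
  have hμ0 : ℵ₀ ≤ lam.ord.cof := Ordinal.aleph0_le_cof.2 (isSuccLimit_ord hlam)
  have hμlam : lam.ord.cof ≤ lam := Ordinal.cof_ord_le lam
  have hβlim : Order.IsSuccLimit (lam.ord.cof.ord) := isSuccLimit_ord hμ0
  have hlamlim : Order.IsSuccLimit lam.ord := isSuccLimit_ord hlam
  have hlight' : ∀ x : ↥R, ∃ C : Set X, IsSmallClosed κ C ∧ (x : X) ∉ C ∧ #(Cᶜ : Set X) < lam :=
    fun x => hlight x x.2
  choose C hCsc hCnm hCcc using hlight'
  set V : ↥R → Set X := fun x => R ∩ (C x)ᶜ with hVdef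
  have hVlt : ∀ x, #(V x) < lam :=
    fun x => (mk_le_mk_of_subset inter_subset_right).trans_lt (hCcc x)
  have hVmem : ∀ x : ↥R, (x : X) ∈ V x := fun x => ⟨x.2, hCnm x⟩
  have hVsub : ∀ x, V x ⊆ R := fun x => inter_subset_left
  -- enumeration of R
  have heR : #↥R = #(lam.ord.ToType) := by rw [hRcard, mk_ord_toType]
  obtain ⟨e⟩ := Cardinal.eq.mp heR
  set rnk : ↥R → Ordinal.{u} := fun x => rk (e x) with hrnkdef
  have hrnklt : ∀ x, rnk x < lam.ord := fun x => rk_lt_self (e x)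
  -- cofinal family
  obtain ⟨gf, hgf⟩ := Ordinal.exists_blsub_cof lam.ord
  set gf' : Ordinal.{u} → Ordinal.{u} := fun a => if h : a < lam.ord.cof.ord then gf a h else 0
    with hgf'def
  set g : lam.ord.cof.ord.ToType → Ordinal.{u} := fun i => gf' (rk i) + 1 with hgdef
  have hglt : ∀ i, g i < lam.ord := by
    intro i
    have h1 : rk i < lam.ord.cof.ord := rk_lt_self i
    have h2 : gf' (rk i) < lam.ord := by
      rw [hgf'def]
      simp only [dif_pos h1]
      exact lt_of_lt_of_le (Ordinal.lt_blsub gf _ h1) hgf.le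
    show gf' (rk i) + 1 < lam.ord
    rw [Ordinal.add_one_eq_succ]
    exact hlamlim.succ_lt h2
  have hgub : ∀ o' < lam.ord, ∃ i, o' < g i := by
    intro o' ho'
    have h1 : o' < Ordinal.blsub _ gf := by rw [hgf]; exact ho'
    obtain ⟨a, ha, hle⟩ := Ordinal.lt_blsub_iff.1 h1
    refine ⟨Ordinal.ToType.mk (o := lam.ord.cof.ord) ⟨a, ha⟩, ?_⟩
    show o' < gf' (rk (Ordinal.ToType.mk (o := lam.ord.cof.ord) ⟨a, ha⟩)) + 1
    rw [rk_eq a ha, hgf'def]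
    simp only [dif_pos ha]
    rw [Ordinal.add_one_eq_succ]
    exact (Order.lt_succ_iff_of_not_isMax (not_isMax _)).2 hle
  -- index cardinality bounds
  have hidxT : ∀ o' < lam.ord, #{x : ↥R // rnk x < o'} < lam := by
    intro o' ho'
    obtain ⟨t₀, ht₀⟩ := rk_surj ho'
    have hle : #{x : ↥R // rnk x < o'} ≤ #{t : lam.ord.ToType // rk t < rk t₀} := by
      refine mk_le_of_injective (f := fun x : {x : ↥R // rnk x < o'} =>
        (⟨e x.1, by rw [ht₀]; exact x.2⟩ : {t : lam.ord.ToType // rk t < rk t₀})) ?_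
      intro x y hxy
      apply Subtype.ext
      apply e.injective
      exact congrArg Subtype.val hxy
    exact hle.trans_lt (mk_rk_lt t₀)
  have hidxI : ∀ a < lam.ord.cof.ord,
      #{i : lam.ord.cof.ord.ToType // rk i < a} < lam.ord.cof := by
    intro a ha
    obtain ⟨i₀, hi₀⟩ := rk_surj ha
    have hle : #{i : lam.ord.cof.ord.ToType // rk i < a} ≤
        #{i : lam.ord.cof.ord.ToType // rk i < rk i₀} :=
      mk_subtype_le_of_subset (fun i hi => by rw [hi₀]; exact hi)
    exact hle.trans_lt (mk_rk_lt i₀)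
  -- the construction
  set bound : lam.ord.cof.ord.ToType → Cardinal.{u} :=
    fun i => if lam.IsRegular then lam else (g i).card with hbdef
  set crit : ↥R → lam.ord.cof.ord.ToType → Prop :=
    fun x i => rnk x < g i ∧ #(V x) < bound i with hcritdef
  set batch : lam.ord.cof.ord.ToType → Set X :=
    fun i => ⋃ x : {x : ↥R // crit x i}, V x.1 with hbatchdef
  have hbatchsub : ∀ i, batch i ⊆ R := fun i => iUnion_subset fun x => hVsub x.1
  have hbatchsize : ∀ i, #(batch i) < lam := by
    intro i
    have h2 : #{x : ↥R // crit x i} < lam :=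
      (mk_subtype_le_of_subset (fun x hx => hx.1)).trans_lt (hidxT _ (hglt i))
    have hle : #(batch i) ≤ Cardinal.sum (fun x : {x : ↥R // crit x i} => #(V x.1)) :=
      mk_iUnion_le_sum_mk
    by_cases hreg : lam.IsRegular
    · exact hle.trans_lt (sum_lt_of_isRegular hreg h2 (fun x => hVlt x.1))
    · have hb : ∀ x : {x : ↥R // crit x i}, #(V x.1) ≤ (g i).card := by
        intro x
        have h3 := x.2.2
        rw [hbdef] at h3
        simp only [if_neg hreg] at h3
        exact h3.le
      calc #(batch i) ≤ Cardinal.sum (fun x : {x : ↥R // crit x i} => #(V x.1)) := hle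
        _ ≤ Cardinal.sum (fun _ : {x : ↥R // crit x i} => (g i).card) := sum_le_sum _ _ hb
        _ = #{x : ↥R // crit x i} * (g i).card := sum_const' _ _
        _ < lam := mul_lt_of_lt hlam h2 (Cardinal.lt_ord.1 (hglt i))
  set f : Ordinal.{u} → Set X :=
    fun a => ⋃ i : {i : lam.ord.cof.ord.ToType // rk i < a}, batch i.1 with hfdef
  have hmono : ∀ a b : Ordinal.{u}, a ≤ b → f a ⊆ f b := by
    intro a b hab x hx
    obtain ⟨i, hxi⟩ := mem_iUnion.1 hx
    exact mem_iUnion.2 ⟨⟨i.1, lt_of_lt_of_le i.2 hab⟩, hxi⟩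
  have hbf : ∀ (i) (a : Ordinal.{u}), rk i < a → batch i ⊆ f a :=
    fun i a hia x hx => mem_iUnion.2 ⟨⟨i, hia⟩, hx⟩
  have hfsubR : ∀ a, f a ⊆ R := fun a => iUnion_subset fun i => hbatchsub i.1
  have hcont : ∀ δ : Ordinal.{u}, (δ = 0 ∨ Order.IsSuccLimit δ) → f δ = ⋃ a ∈ Iio δ, f a := by
    intro δ hδ
    apply subset_antisymm
    · intro x hx
      obtain ⟨i, hxi⟩ := mem_iUnion.1 hx
      rcases hδ with rfl | hδ
      · exact absurd i.2 (not_lt_of_ge zero_le)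
      · refine mem_biUnion (show rk i.1 + 1 ∈ Iio δ from ?_) ?_
        · rw [mem_Iio, Ordinal.add_one_eq_succ]
          exact hδ.succ_lt i.2
        · refine hbf i.1 _ ?_ hxi
          rw [Ordinal.add_one_eq_succ]
          exact Order.lt_succ_of_not_isMax (not_isMax _)
    · exact iUnion₂_subset fun a ha => hmono a δ ha.le
  have hsucclam : ¬lam.IsRegular → ∀ ρ : Cardinal.{u}, ρ < lam → Order.succ ρ < lam := by
    intro hreg ρ hρ
    have hne : lam ≠ ℵ₀ := fun h => hreg (h ▸ isRegular_aleph0)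
    rcases lt_or_ge ρ ℵ₀ with h | h
    · exact (Order.succ_le_of_lt h).trans_lt (lt_of_le_of_ne hlam (Ne.symm hne))
    · rcases (Order.succ_le_of_lt hρ).lt_or_eq with h' | h'
      · exact h'
      · exact absurd (h' ▸ isRegular_succ h) hreg
  have hcover : ∀ x : ↥R, ∃ i, crit x i := by
    intro x
    by_cases hreg : lam.IsRegular
    · obtain ⟨i, hi⟩ := hgub (rnk x) (hrnklt x)
      refine ⟨i, hi, ?_⟩
      rw [hbdef]
      simp only [if_pos hreg]
      exact hVlt x
    · have h1 : (Order.succ #(V x)).ord < lam.ord := ord_lt_ord.2 (hsucclam hreg _ (hVlt x))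
      obtain ⟨i, hi⟩ := hgub (max (rnk x) ((Order.succ #(V x)).ord)) (max_lt (hrnklt x) h1)
      refine ⟨i, (le_max_left _ _).trans_lt hi, ?_⟩
      rw [hbdef]
      simp only [if_neg hreg]
      have h2 : (Order.succ #(V x)).ord ≤ g i := ((le_max_right _ _).trans_lt hi).le
      have h3 : Order.succ #(V x) ≤ (g i).card := by
        have h4 := Ordinal.card_le_card h2
        rwa [card_ord] at h4
      exact (Order.lt_succ_of_not_isMax (not_isMax _)).trans_le h3
  have htop : R = ⋃ a ∈ Iio lam.ord.cof.ord, f a := by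
    apply subset_antisymm
    · intro x hx
      obtain ⟨i, hcrit⟩ := hcover ⟨x, hx⟩
      have hx1 : x ∈ batch i := mem_iUnion.2 ⟨⟨⟨x, hx⟩, hcrit⟩, hVmem ⟨x, hx⟩⟩
      have hia : rk i < lam.ord.cof.ord := rk_lt_self i
      refine mem_biUnion (show rk i + 1 ∈ Iio lam.ord.cof.ord from ?_) (hbf i _ ?_ hx1)
      · rw [mem_Iio, Ordinal.add_one_eq_succ]
        exact hβlim.succ_lt hia
      · rw [Ordinal.add_one_eq_succ]
        exact Order.lt_succ_of_not_isMax (not_isMax _)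
    · exact iUnion₂_subset fun a _ => hfsubR a
  have hsize : ∀ a ∈ Iio lam.ord.cof.ord, #(f a) < lam := by
    intro a ha
    have hidx : #{i : lam.ord.cof.ord.ToType // rk i < a} < lam.ord.cof := hidxI a ha
    have hsup : (⨆ i : {i : lam.ord.cof.ord.ToType // rk i < a}, #(batch i.1)) < lam :=
      Ordinal.iSup_lt hidx (fun i => hbatchsize i.1)
    calc #(f a) ≤ Cardinal.sum
          (fun i : {i : lam.ord.cof.ord.ToType // rk i < a} => #(batch i.1)) :=
        mk_iUnion_le_sum_mk
      _ ≤ _ * _ := sum_le_mk_mul_iSup _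
      _ < lam := mul_lt_of_lt hlam (hidx.trans_le hμlam) hsup
  have hsc : ∀ a ∈ Iio lam.ord.cof.ord, IsSmallClosed κ (R \ f a) := by
    intro a _
    rw [isSmallClosed_iff hκ.aleph0_le]
    intro y hy
    obtain ⟨S, hS1, hS2, hS3⟩ := mem_smallClosure_iff.1 hy
    have hclR : closure S ⊆ R := closure_minimal (hS1.trans diff_subset) hRcl
    have hkey : ∀ (i : {i : lam.ord.cof.ord.ToType // rk i < a})
        (x : {x : ↥R // crit x i.1}), closure S ∩ V x.1 = ∅ := by
      intro i x
      have hSC : S ⊆ C x.1 := by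
        intro s hs
        obtain ⟨hsR, hsf⟩ := hS1 hs
        by_contra hsC
        exact hsf (hbf i.1 a i.2 (mem_iUnion.2 ⟨x, ⟨hsR, hsC⟩⟩))
      have hclC : closure S ⊆ C x.1 := by
        have h1 : closure S ⊆ smallClosure κ (C x.1) := closure_subset_smallClosure hSC hS2
        rwa [hCsc x.1] at h1
      apply eq_empty_iff_forall_notMem.2
      rintro z ⟨hz1, hz2⟩
      exact hz2.2 (hclC hz1)
    refine ⟨hclR hS3, ?_⟩
    intro hyf
    obtain ⟨i, hyi⟩ := mem_iUnion.1 hyf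
    obtain ⟨x, hyx⟩ := mem_iUnion.1 hyi
    have hmem : y ∈ closure S ∩ V x.1 := ⟨hS3, hyx⟩
    rw [hkey i x] at hmem
    exact hmem
  exact ⟨f, ⟨fun a b hab _ => hmono a b hab, fun δ _ hδ => hcont δ hδ, htop⟩, hsize, hsc⟩


end Stmt14Aux

/-- If `κ ≤ λ` are infinite cardinals with `κ` regular and `X` is a
π-regular space with `|X| = λ` that is not `cf(λ)`-resolvable, then there are a nonempty
regular closed `Y ⊆ X` and a chain decomposition `⟨Y_α : α < cf(λ)⟩` of `Y` with
`|Y_α| < λ` and `Y \\ Y_α` `<κ`-closed for all `α < cf(λ)`. -/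
theorem stmt14 {X : Type u} [TopologicalSpace X] (κ lam : Cardinal.{u})
    (hκ : κ.IsRegular) (hlam : ℵ₀ ≤ lam) (hkl : κ ≤ lam) (hX : #X = lam)
    (hpireg : PiRegularSpace X) (hnres : ¬ IsLamResolvable X lam.ord.cof) :
    ∃ Y : Set X, Y.Nonempty ∧ IsRegClosed Y ∧
      ∃ f : Ordinal.{u} → Set X,
        IsChainDecomp lam.ord.cof.ord f Y ∧
        (∀ a ∈ Set.Iio lam.ord.cof.ord, #(f a) < lam) ∧
        (∀ a ∈ Set.Iio lam.ord.cof.ord, IsSmallClosed κ (Y \ f a)) := by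
  classical
  by_cases hd : ∀ U : Set X, IsOpen U → U.Nonempty →
      ∃ x ∈ U, ∀ C : Set X, IsSmallClosed κ C → x ∉ C → lam ≤ #(Cᶜ : Set X)
  · exact absurd (Stmt14Aux.resolvable_of_dense_heavy hκ hlam hkl hX hd) hnres
  · push_neg at hd
    obtain ⟨U, hUo, hUne, hUlight⟩ := hd
    obtain ⟨R, hRne, hRrc, hRU⟩ := hpireg U hUo hUne
    have hRcl : IsClosed R := by rw [hRrc]; exact isClosed_closure
    have hlight : ∀ x ∈ R, ∃ C : Set X, IsSmallClosed κ C ∧ x ∉ C ∧ #(Cᶜ : Set X) < lam :=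
      fun x hx => hUlight x (hRU hx)
    rcases lt_or_eq_of_le ((mk_set_le R).trans_eq hX) with hsm | heq
    · obtain ⟨f, h1, h2, h3⟩ := Stmt14Aux.trivial_chain hκ.aleph0_le hlam hRcl hsm
      exact ⟨R, hRne, hRrc, f, h1, h2, h3⟩
    · obtain ⟨f, h1, h2, h3⟩ := Stmt14Aux.main_chain hκ hlam hkl hRcl heq hlight
      exact ⟨R, hRne, hRrc, f, h1, h2, h3⟩
end

section
/- Let κ be an infinite cardinal and X a regular κ⁺-compact topological space with |X| = Δ(X) = κ⁺ which has no subset that is κ⁺-approximated in X. Then for every subset A of X of cardinality κ⁺, the set A° of complete accumulation points of A, with the subspace topology, is a regular κ⁺-compact space satisfying |A°| = Δ(A°) = κ⁺. -/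
open Cardinal Set Topology

universe u

namespace S18

section Basics
variable {X : Type u} [TopologicalSpace X]

lemma isClosed_caPts (A : Set X) : IsClosed (caPts A) := by
  rw [← isOpen_compl_iff, isOpen_iff_forall_mem_open]
  rintro x hx
  simp only [mem_compl_iff, caPts, mem_setOf_eq, not_forall] at hx
  obtain ⟨U, hU, hxU, hcard⟩ := hx
  exact ⟨U, fun y hy hall => hcard (hall U hU hy), hU, hxU⟩

lemma caPts_mono {S T : Set X} (hST : S ⊆ T) (hc : #T ≤ #S) : caPts S ⊆ caPts T := by
  intro x hx U hU hxU
  refine le_antisymm (mk_le_mk_of_subset inter_subset_right) ?_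
  calc #T ≤ #S := hc
    _ = #(↥(U ∩ S)) := (hx U hU hxU).symm
    _ ≤ #(↥(U ∩ T)) := mk_le_mk_of_subset (inter_subset_inter_right _ hST)

lemma caPts_subset_closure {A : Set X} (hA : #A ≠ 0) : caPts A ⊆ closure A := by
  intro x hx
  rw [mem_closure_iff]
  intro o ho hxo
  rw [← Set.nonempty_coe_sort, ← mk_ne_zero_iff, hx o ho hxo]
  exact hA

end Basics

/-- helper cardinal bound for bounded unions -/
lemma mk_biUnion_le' {α ι : Type u} (s : Set ι) (f : ι → Set α) (c : Cardinal.{u})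
    (hc : ∀ i, #(f i) ≤ c) : #(⋃ i ∈ s, f i) ≤ #s * c := by
  rw [biUnion_eq_iUnion]
  calc #(⋃ i : s, f i) ≤ Cardinal.sum (fun i : s => #(f i.1)) := mk_iUnion_le_sum_mk
    _ ≤ Cardinal.sum (fun _ : s => c) := Cardinal.sum_le_sum _ _ (fun i => hc i.1)
    _ = #s * c := by rw [Cardinal.sum_const']


/-- the index type: a well order of type `κ⁺` -/
abbrev TT (κ : Cardinal.{u}) : Type u := (Order.succ κ).ord.ToType

variable {κ : Cardinal.{u}}

lemma mk_TT (κ : Cardinal.{u}) : #(TT κ) = Order.succ κ := mk_ord_toType _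

/-- the class of `i` -/
def cls (E : TT κ → TT κ → Prop) (i : TT κ) : Set (TT κ) := {j | E i j}

/-- invariant: equivalence with small classes -/
def GoodE (κ : Cardinal.{u}) (E : TT κ → TT κ → Prop) : Prop :=
  Equivalence E ∧ ∀ i, #(cls E i) ≤ κ

lemma succ_ne_zero' (κ : Cardinal.{u}) : Order.succ κ ≠ 0 := by
  intro h
  exact absurd (h ▸ κ.zero_le.trans_lt (Order.lt_succ κ)) (lt_irrefl 0)

instance TT_nonempty (κ : Cardinal.{u}) : Nonempty (TT κ) := by
  rw [← mk_ne_zero_iff, mk_TT]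
  exact succ_ne_zero' κ

open scoped Classical in
noncomputable def mrep (E : TT κ → TT κ → Prop) (i : TT κ) : TT κ :=
  if h : (cls E i).Nonempty then (wellFounded_lt (α := TT κ)).min _ h else Classical.arbitrary _

lemma cls_eq_of_rel (E : TT κ → TT κ → Prop) (hE : Equivalence E) {i j : TT κ} (h : E i j) :
    cls E i = cls E j := by
  ext z; exact ⟨fun hz => hE.trans (hE.symm h) hz, fun hz => hE.trans h hz⟩

lemma mrep_congr (E : TT κ → TT κ → Prop) {i j : TT κ} (h : cls E i = cls E j)
    (hne : (cls E i).Nonempty) : mrep E i = mrep E j := by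
  unfold mrep
  rw [h]

lemma mrep_rel (E : TT κ → TT κ → Prop) (hE : Equivalence E) (i : TT κ) : E i (mrep E i) := by
  unfold mrep
  rw [dif_pos ⟨i, hE.refl i⟩]
  exact (wellFounded_lt (α := TT κ)).min_mem _ ⟨i, hE.refl i⟩

lemma mrep_eq_of_rel (E : TT κ → TT κ → Prop) (hE : Equivalence E) {i j : TT κ} (h : E i j) :
    mrep E i = mrep E j :=
  mrep_congr E (cls_eq_of_rel E hE h) ⟨i, hE.refl i⟩

/-- a related mrep-fixed point is the mrep -/
lemma eq_mrep_of_fixed (E : TT κ → TT κ → Prop) (hE : Equivalence E) {i m : TT κ}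
    (h : E i m) (hm : mrep E m = m) : m = mrep E i := by
  rw [← hm, mrep_eq_of_rel E hE h]

lemma mrep_idem (E : TT κ → TT κ → Prop) (hE : Equivalence E) (i : TT κ) :
    mrep E (mrep E i) = mrep E i :=
  (mrep_eq_of_rel E hE (mrep_rel E hE i)).symm

/-- greedy injective selector from `κ⁺`-sized pools -/
lemma exists_selector {ι : Type u} (hι : #ι = Order.succ κ) (F : ι → Set (TT κ))
    (hF : ∀ z, #(F z) = Order.succ κ) :
    ∃ Q : ι → TT κ, Function.Injective Q ∧ ∀ z, Q z ∈ F z := by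
  classical
  obtain ⟨e⟩ : Nonempty (ι ≃ TT κ) := Cardinal.eq.mp (by rw [hι, mk_TT])
  have wf : WellFounded ((· < ·) : TT κ → TT κ → Prop) := wellFounded_lt
  set step : ∀ t : TT κ, (∀ s : TT κ, s < t → TT κ) → TT κ := fun t ih =>
    if h : (F (e.symm t) \ range (fun s : Iio t => ih s.1 s.2)).Nonempty then h.choose else t
    with hstep
  set g : TT κ → TT κ := wf.fix step with hg
  have geq : ∀ t, g t = step t (fun s _ => g s) := fun t => wf.fix_eq step t
  have hne : ∀ t : TT κ, (F (e.symm t) \ range (fun s : Iio t => g s.1)).Nonempty := by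
    intro t
    rw [Set.nonempty_iff_ne_empty, Ne, diff_eq_empty]
    intro hsub
    have h1 : #(F (e.symm t)) ≤ #(range (fun s : Iio t => g s.1)) := mk_le_mk_of_subset hsub
    have h2 : #(range (fun s : Iio t => g s.1)) ≤ #(Iio t) := mk_range_le
    have h3 : #(Iio t) < Order.succ κ := mk_Iio_toType_ord_lt t
    rw [hF] at h1
    exact absurd (h1.trans h2) (not_le.mpr h3)
  have gmem : ∀ t, g t ∈ F (e.symm t) ∧ ∀ s, s < t → g t ≠ g s := by
    intro t
    have h := geq t
    rw [hstep] at h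
    simp only at h
    rw [dif_pos (hne t)] at h
    have hc := (hne t).choose_spec
    rw [← h] at hc
    refine ⟨hc.1, fun s hs hgs => hc.2 ?_⟩
    exact ⟨⟨s, hs⟩, hgs.symm⟩
  have ginj : Function.Injective g := by
    intro s t hst
    rcases lt_trichotomy s t with h | h | h
    · exact absurd hst.symm ((gmem t).2 s h)
    · exact h
    · exact absurd hst ((gmem s).2 t h)
  refine ⟨fun z => g (e z), fun a b hab => e.injective (ginj hab), fun z => ?_⟩
  have := (gmem (e z)).1
  rwa [e.symm_apply_apply] at this


section arith
variable (hκ : ℵ₀ ≤ κ)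
include hκ

lemma succ_arith_mul : κ * Order.succ κ ≤ Order.succ κ := by
  calc κ * Order.succ κ ≤ Order.succ κ * Order.succ κ :=
        mul_le_mul_left (Order.le_succ κ) _
    _ = Order.succ κ := Cardinal.mul_eq_self (hκ.trans (Order.le_succ κ))

lemma le_kappa_of_lt_succ {c : Cardinal.{u}} (h : c ≤ Order.succ κ) (h2 : c ≠ Order.succ κ) :
    c ≤ κ := by
  rcases lt_or_eq_of_le h with h' | h'
  · exact Order.lt_succ_iff.mp h'
  · exact absurd h' h2

lemma not_le_kappa {c : Cardinal.{u}} (h : c = Order.succ κ) : ¬ c ≤ κ := by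
  rw [h]
  exact not_le.mpr (Order.lt_succ κ)

end arith

section pieces

variable {X : Type u} [TopologicalSpace X]
variable (b : TT κ → Set X)

/-- the union of the base pieces in the class of `i` -/
def piece (E : TT κ → TT κ → Prop) (i : TT κ) : Set X := ⋃ j ∈ cls E i, b j

/-- indices whose piece has `x` as a complete accumulation point -/
def seers (E : TT κ → TT κ → Prop) (x : X) : Set (TT κ) := {i | x ∈ caPts (piece b E i)}

/-- points seen by `κ⁺` many pieces -/
def fold (E : TT κ → TT κ → Prop) : Set X := {x | #(seers b E x) = Order.succ κ}

variable {B : Set X}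

lemma piece_subset (hbsub : ∀ t, b t ⊆ B) {E : TT κ → TT κ → Prop} (i : TT κ) :
    piece b E i ⊆ B := by
  refine iUnion₂_subset fun j _ => hbsub j

lemma piece_card (hκ : ℵ₀ ≤ κ) (hbcard : ∀ t, #(b t) = Order.succ κ)
    {E : TT κ → TT κ → Prop} (hE : GoodE κ E) (i : TT κ) :
    #(piece b E i) = Order.succ κ := by
  refine le_antisymm ?_ ?_
  · calc #(piece b E i) ≤ #(cls E i) * Order.succ κ :=
          mk_biUnion_le' _ _ _ (fun j => (hbcard j).le)
      _ ≤ κ * Order.succ κ := mul_le_mul_left (hE.2 i) _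
      _ ≤ Order.succ κ := succ_arith_mul hκ
  · rw [← hbcard i]
    exact mk_le_mk_of_subset (subset_biUnion_of_mem (hE.1.refl i))

lemma piece_nonempty (hκ : ℵ₀ ≤ κ) (hbcard : ∀ t, #(b t) = Order.succ κ)
    {E : TT κ → TT κ → Prop} (hE : GoodE κ E) (i : TT κ) :
    (piece b E i).Nonempty := by
  rw [nonempty_iff_ne_empty]
  intro h
  have hc := piece_card b hκ hbcard hE i
  rw [h, mk_emptyCollection] at hc
  exact absurd (hc ▸ κ.zero_le.trans_lt (Order.lt_succ κ)) (lt_irrefl _)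

lemma cls_disjoint {E : TT κ → TT κ → Prop} (hE : Equivalence E) {i j : TT κ}
    (h : ¬ E i j) : ∀ z, z ∈ cls E i → z ∉ cls E j := by
  intro z hzi hzj
  exact h (hE.trans hzi (hE.symm hzj))

lemma piece_disjoint (hbdisj : Pairwise fun s t => Disjoint (b s) (b t))
    {E : TT κ → TT κ → Prop} (hE : Equivalence E) {i j : TT κ}
    (h : ¬ E i j) : Disjoint (piece b E i) (piece b E j) := by
  rw [Set.disjoint_left]
  rintro x hxi hxj
  simp only [piece, mem_iUnion, exists_prop] at hxi hxj
  obtain ⟨z1, hz1, hxz1⟩ := hxi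
  obtain ⟨z2, hz2, hxz2⟩ := hxj
  have hne : z1 ≠ z2 := by
    rintro rfl
    exact cls_disjoint hE h z1 hz1 hz2
  exact Set.disjoint_left.mp (hbdisj hne) hxz1 hxz2

lemma piece_mono {E E' : TT κ → TT κ → Prop} (hmono : ∀ i j, E i j → E' i j) (i : TT κ) :
    piece b E i ⊆ piece b E' i := by
  refine iUnion₂_subset fun j hj => subset_biUnion_of_mem (hmono i j hj)

lemma piece_congr {E : TT κ → TT κ → Prop} (hE : Equivalence E) {i j : TT κ} (h : E i j) :
    piece b E i = piece b E j := by
  unfold piece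
  rw [cls_eq_of_rel E hE h]

lemma caPts_piece_subset (hκ : ℵ₀ ≤ κ) (hbsub : ∀ t, b t ⊆ B)
    (hbcard : ∀ t, #(b t) = Order.succ κ)
    {E : TT κ → TT κ → Prop} (hE : GoodE κ E) (hB : #B = Order.succ κ)
    (i : TT κ) : caPts (piece b E i) ⊆ caPts B :=
  caPts_mono (piece_subset b hbsub i) (by rw [hB, piece_card b hκ hbcard hE i])

/-- the image of a `κ⁺`-sized set of indices under `mrep` has size `κ⁺` -/
lemma mrep_image_card (hκ : ℵ₀ ≤ κ) {E : TT κ → TT κ → Prop} (hE : GoodE κ E) {W : Set (TT κ)}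
    (hW : #W = Order.succ κ) : #(mrep E '' W) = Order.succ κ := by
  refine le_antisymm (le_trans mk_image_le (le_of_eq hW)) ?_
  by_contra hlt
  rw [not_le] at hlt
  have himg : #(mrep E '' W) ≤ κ := Order.lt_succ_iff.mp hlt
  have hsub : W ⊆ ⋃ m ∈ mrep E '' W, cls E m := by
    intro i hi
    refine mem_biUnion (mem_image_of_mem _ hi) ?_
    exact hE.1.symm (mrep_rel E hE.1 i)
  have := (mk_le_mk_of_subset hsub).trans
    ((mk_biUnion_le' _ _ κ (fun m => hE.2 m)).trans (mul_le_mul_left himg κ))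
  rw [hW, Cardinal.mul_eq_self hκ] at this
  exact absurd this (not_le.mpr (Order.lt_succ κ))

end pieces

section KS
variable {X : Type u} [TopologicalSpace X] {κ : Cardinal.{u}}

/-- One merging stage. -/
lemma key_succ (hκ : ℵ₀ ≤ κ) {B : Set X} (b : TT κ → Set X)
    (hbsub : ∀ t, b t ⊆ B) (hbcard : ∀ t, #(b t) = Order.succ κ)
    (hB : #B = Order.succ κ) (hsmall : #(caPts B) ≤ κ)
    {E : TT κ → TT κ → Prop} (hE : GoodE κ E) :
    ∃ E' : TT κ → TT κ → Prop, GoodE κ E' ∧ (∀ i j, E i j → E' i j) ∧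
      ∃ S : Set (TT κ), #S = Order.succ κ ∧
        (∀ i ∈ S, ∀ j ∈ S, i ≠ j → ¬ E' i j) ∧
        (∀ i ∈ S, closure (fold b E) ⊆ caPts (piece b E' i)) := by
  classical
  by_cases hD : (fold b E).Nonempty
  · obtain ⟨x₀, hx₀⟩ := hD
    set D := fold b E with hDdef
    have hDsub : D ⊆ caPts B := by
      intro x hx
      have hne : (seers b E x).Nonempty := by
        rw [← Set.nonempty_coe_sort, ← mk_ne_zero_iff, hx]
        intro h
        exact absurd (h ▸ κ.zero_le.trans_lt (Order.lt_succ κ)) (lt_irrefl _)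
      obtain ⟨i, hi⟩ := hne
      exact caPts_piece_subset b hκ hbsub hbcard hE hB i hi
    have hDcard : #D ≤ κ := (mk_le_mk_of_subset hDsub).trans hsmall
    have hι : #(TT κ × ↥D) = Order.succ κ := by
      refine le_antisymm ?_ ?_
      · rw [mk_prod, lift_id, lift_id, mk_TT]
        calc Order.succ κ * #D ≤ Order.succ κ * Order.succ κ :=
              mul_le_mul_right (hDcard.trans (Order.le_succ κ)) _
          _ = Order.succ κ := Cardinal.mul_eq_self (hκ.trans (Order.le_succ κ))
      · rw [← mk_TT κ]
        exact mk_le_of_injective (f := fun t : TT κ => ((t, ⟨x₀, hx₀⟩) : TT κ × ↥D))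
          (fun a b h => congrArg Prod.fst h)
    obtain ⟨Q, hQinj, hQmem⟩ := exists_selector hι
      (fun z => mrep E '' (seers b E z.2.1))
      (fun z => mrep_image_card hκ hE z.2.2)
    have hQfix : ∀ z, mrep E (Q z) = Q z := by
      intro z
      obtain ⟨w, _, hQw⟩ := hQmem z
      rw [← hQw, mrep_idem E hE.1 w]
    have hQsee : ∀ z : TT κ × ↥D, (z.2 : X) ∈ caPts (piece b E (Q z)) := by
      intro z
      obtain ⟨w, hw, hQw⟩ := hQmem z
      have hp : piece b E (Q z) = piece b E w := by
        rw [← hQw]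
        exact (piece_congr b hE.1 (mrep_rel E hE.1 w)).symm
      rw [hp]
      exact hw
    set E' : TT κ → TT κ → Prop :=
      fun i j => E i j ∨ ∃ p q : TT κ × ↥D, p.1 = q.1 ∧ E i (Q p) ∧ E j (Q q) with hE'def
    have hmono : ∀ i j, E i j → E' i j := fun i j h => Or.inl h
    have hpin : ∀ (j : TT κ) (q : TT κ × ↥D), E j (Q q) → Q q = mrep E j := fun j q h =>
      eq_mrep_of_fixed E hE.1 h (hQfix q)
    have hE'equiv : Equivalence E' := by
      constructor
      · exact fun i => Or.inl (hE.1.refl i)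
      · rintro i j (h | ⟨p, q, hpq, hi, hj⟩)
        · exact Or.inl (hE.1.symm h)
        · exact Or.inr ⟨q, p, hpq.symm, hj, hi⟩
      · rintro i j k (hij | ⟨p, q, hpq, hi, hj⟩) (hjk | ⟨p', q', hpq', hj', hk'⟩)
        · exact Or.inl (hE.1.trans hij hjk)
        · exact Or.inr ⟨p', q', hpq', hE.1.trans hij hj', hk'⟩
        · exact Or.inr ⟨p, q, hpq, hi, hE.1.trans (hE.1.symm hjk) hj⟩
        · have h1 : Q q = mrep E j := hpin j q hj
          have h2 : Q p' = mrep E j := hpin j p' hj'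
          have hqp : q = p' := hQinj (by rw [h1, h2])
          exact Or.inr ⟨p, q', by rw [hpq, hqp, hpq'], hi, hk'⟩
    have hE'small : ∀ i, #(cls E' i) ≤ κ := by
      intro i
      by_cases hip : ∃ p : TT κ × ↥D, E i (Q p)
      · obtain ⟨p₀, hp₀⟩ := hip
        have hsub : cls E' i ⊆ cls E i ∪ ⋃ q ∈ {q : TT κ × ↥D | q.1 = p₀.1}, cls E (Q q) := by
          rintro j (h | ⟨p, q, hpq, hi2, hj2⟩)
          · exact Or.inl h
          · right
            have hQp : Q p = Q p₀ := by rw [hpin i p hi2, hpin i p₀ hp₀]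
            have hp : p = p₀ := hQinj hQp
            exact mem_biUnion (show q ∈ {q : TT κ × ↥D | q.1 = p₀.1} by
              simp only [mem_setOf_eq]; rw [← hpq, hp]) (hE.1.symm hj2)
        refine (mk_le_mk_of_subset hsub).trans ((mk_union_le _ _).trans ?_)
        have h2 : #(⋃ q ∈ {q : TT κ × ↥D | q.1 = p₀.1}, cls E (Q q)) ≤ κ := by
          refine (mk_biUnion_le' _ _ κ (fun q => hE.2 (Q q))).trans ?_
          have hinj : #({q : TT κ × ↥D | q.1 = p₀.1}) ≤ #D := by
            refine mk_le_of_injective (f := fun q : {q : TT κ × ↥D // q.1 = p₀.1} => q.1.2) ?_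
            rintro ⟨⟨β, x⟩, hq⟩ ⟨⟨β', x'⟩, hq'⟩ h
            simp only [mem_setOf_eq] at hq hq'
            simp only at h
            simp only [Subtype.mk.injEq, Prod.mk.injEq]
            exact ⟨hq.trans hq'.symm, h⟩
          calc #({q : TT κ × ↥D | q.1 = p₀.1}) * κ ≤ #D * κ := mul_le_mul_left hinj κ
            _ ≤ κ * κ := mul_le_mul_left hDcard κ
            _ = κ := Cardinal.mul_eq_self hκ
        calc #(cls E i) + #(⋃ q ∈ {q : TT κ × ↥D | q.1 = p₀.1}, cls E (Q q)) ≤ κ + κ :=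
              add_le_add (hE.2 i) h2
          _ = κ := Cardinal.add_eq_self hκ
      · have hcl : cls E' i = cls E i := by
          ext j
          constructor
          · rintro (h | ⟨p, q, _, hi2, _⟩)
            · exact h
            · exact absurd ⟨p, hi2⟩ hip
          · exact fun h => Or.inl h
        rw [hcl]
        exact hE.2 i
    have hQβinj : Function.Injective (fun β : TT κ => Q (β, ⟨x₀, hx₀⟩)) := by
      intro a b h
      have := hQinj h
      exact congrArg Prod.fst this
    refine ⟨E', ⟨hE'equiv, hE'small⟩, hmono,
      range (fun β : TT κ => Q (β, ⟨x₀, hx₀⟩)), ?_, ?_, ?_⟩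
    · rw [mk_range_eq _ hQβinj, mk_TT]
    · rintro i ⟨β, rfl⟩ j ⟨β', rfl⟩ hne hE'ij
      simp only at hne hE'ij
      rcases hE'ij with h | ⟨p, q, hpq, hi2, hj2⟩
      · have hmr := mrep_eq_of_rel E hE.1 h
        rw [hQfix, hQfix] at hmr
        exact hne hmr
      · have h1 : Q p = Q (β, ⟨x₀, hx₀⟩) := by
          rw [hpin _ p hi2, hQfix]
        have h2 : Q q = Q (β', ⟨x₀, hx₀⟩) := by
          rw [hpin _ q hj2, hQfix]
        have hp := hQinj h1
        have hq := hQinj h2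
        rw [hp, hq] at hpq
        simp only at hpq
        exact hne (by rw [hpq])
    · rintro i ⟨β, rfl⟩
      simp only
      refine closure_minimal ?_ (isClosed_caPts _)
      intro x hx
      have hsub : piece b E (Q (β, ⟨x, hx⟩)) ⊆ piece b E' (Q (β, ⟨x₀, hx₀⟩)) := by
        refine iUnion₂_subset fun j hj => subset_biUnion_of_mem ?_
        exact Or.inr ⟨(β, ⟨x₀, hx₀⟩), (β, ⟨x, hx⟩), rfl, hE.1.refl _, hE.1.symm hj⟩
      have hxQz : x ∈ caPts (piece b E (Q (β, ⟨x, hx⟩))) := hQsee (β, ⟨x, hx⟩)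
      refine caPts_mono hsub ?_ hxQz
      rw [piece_card b hκ hbcard ⟨hE'equiv, hE'small⟩ _, piece_card b hκ hbcard hE _]
  · refine ⟨E, hE, fun _ _ h => h, mrep E '' univ, ?_, ?_, ?_⟩
    · exact mrep_image_card hκ hE (by rw [mk_univ, mk_TT])
    · rintro i ⟨i0, -, rfl⟩ j ⟨j0, -, rfl⟩ hne hEij
      have hmr := mrep_eq_of_rel E hE.1 hEij
      rw [mrep_idem E hE.1 i0, mrep_idem E hE.1 j0] at hmr
      exact hne hmr
    · intro i _
      rw [not_nonempty_iff_eq_empty.mp hD, closure_empty]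
      exact empty_subset _

end KS

section Main
variable {X : Type u} [TopologicalSpace X] {κ : Cardinal.{u}}

/-- helper cardinal bound for unions over a type -/
lemma mk_iUnion_le'' {α ι : Type u} (f : ι → Set α) (c : Cardinal.{u})
    (hc : ∀ i, #(f i) ≤ c) : #(⋃ i, f i) ≤ #ι * c := by
  calc #(⋃ i, f i) ≤ Cardinal.sum (fun i => #(f i)) := mk_iUnion_le_sum_mk
    _ ≤ Cardinal.sum (fun _ : ι => c) := Cardinal.sum_le_sum _ _ hc
    _ = #ι * c := by rw [Cardinal.sum_const']

/-- the expected behaviour of one merging step -/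
def nextSpec (b : TT κ → Set X) (next : (TT κ → TT κ → Prop) → (TT κ → TT κ → Prop)) : Prop :=
  ∀ E : TT κ → TT κ → Prop, GoodE κ E →
    GoodE κ (next E) ∧ (∀ i j, E i j → next E i j) ∧
      ∃ S : Set (TT κ), #S = Order.succ κ ∧
        (∀ i ∈ S, ∀ j ∈ S, i ≠ j → ¬ next E i j) ∧
        (∀ i ∈ S, closure (fold b E) ⊆ caPts (piece b (next E) i))

lemma exists_next (hκ : ℵ₀ ≤ κ) {B : Set X} (b : TT κ → Set X)
    (hbsub : ∀ t, b t ⊆ B) (hbcard : ∀ t, #(b t) = Order.succ κ)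
    (hB : #B = Order.succ κ) (hsmall : #(caPts B) ≤ κ) :
    ∃ next, nextSpec b next := by
  classical
  refine ⟨fun E => if h : GoodE κ E then
    (key_succ hκ b hbsub hbcard hB hsmall h).choose else E, fun E hE => ?_⟩
  simp only [dif_pos hE]
  exact (key_succ hκ b hbsub hbcard hB hsmall hE).choose_spec

/-- the transfinite iteration of merging steps -/
noncomputable def EE (next : (TT κ → TT κ → Prop) → (TT κ → TT κ → Prop)) :
    Ordinal.{u} → (TT κ → TT κ → Prop) := fun α =>
  Ordinal.limitRecOn α (· = ·)
    (fun _ ih => next ih)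
    (fun lam _ ih => fun i j => ∃ γ, ∃ hγ : γ < lam, ih γ hγ i j)

lemma EE_zero (next : (TT κ → TT κ → Prop) → (TT κ → TT κ → Prop)) :
    EE next 0 = (· = ·) := Ordinal.limitRecOn_zero _ _ _

lemma EE_succ (next : (TT κ → TT κ → Prop) → (TT κ → TT κ → Prop)) (α : Ordinal.{u}) :
    EE next (Order.succ α) = next (EE next α) := Ordinal.limitRecOn_succ _ _ _ _

lemma EE_limit (next : (TT κ → TT κ → Prop) → (TT κ → TT κ → Prop)) {lam : Ordinal.{u}}
    (h : Order.IsSuccLimit lam) :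
    EE next lam = fun i j => ∃ γ, ∃ hγ : γ < lam, EE next γ i j :=
  Ordinal.limitRecOn_limit _ _ _ _ h

end Main

section Trans
variable {X : Type u} [TopologicalSpace X] {κ : Cardinal.{u}}

noncomputable def tyin {o : Ordinal.{u}} (t : o.ToType) : Ordinal.{u} :=
  (@Ordinal.typein o.ToType (· < ·) isWellOrder_lt).toRelEmbedding t

lemma tyin_lt {o : Ordinal.{u}} (t : o.ToType) : tyin t < o := by
  have := @Ordinal.typein_lt_type o.ToType (· < ·) isWellOrder_lt t
  rwa [Ordinal.type_toType] at this

lemma tyin_lt_tyin {o : Ordinal.{u}} {s t : o.ToType} : tyin s < tyin t ↔ s < t :=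
  @Ordinal.typein_lt_typein o.ToType (· < ·) isWellOrder_lt s t

lemma tyin_surj {o : Ordinal.{u}} {γ : Ordinal.{u}} (h : γ < o) : ∃ t : o.ToType, tyin t = γ := by
  have h2 : γ < @Ordinal.type o.ToType (· < ·) isWellOrder_lt := by rwa [Ordinal.type_toType]
  obtain ⟨t, ht⟩ := @Ordinal.typein_surj o.ToType (· < ·) isWellOrder_lt γ h2
  exact ⟨t, ht⟩

lemma card_le_of_lt_ord {κ : Cardinal.{u}} {o : Ordinal.{u}} (h : o < (Order.succ κ).ord) :
    o.card ≤ κ := Order.lt_succ_iff.mp (Cardinal.lt_ord.mp h)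

/-- the main invariant: each stage is good and the stages are increasing -/
lemma EE_good (hκ : ℵ₀ ≤ κ) {b : TT κ → Set X}
    {next : (TT κ → TT κ → Prop) → (TT κ → TT κ → Prop)} (hnext : nextSpec b next) :
    ∀ α : Ordinal.{u}, α < (Order.succ κ).ord →
      GoodE κ (EE next α) ∧
      ∀ γ, γ ≤ α → ∀ i j, EE next γ i j → EE next α i j := by
  intro α
  induction α using Ordinal.induction with
  | _ α IH =>
    intro hα
    rcases Ordinal.zero_or_succ_or_isSuccLimit α with rfl | ⟨β, rfl⟩ | hlim
    · constructor
      · rw [EE_zero]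
        refine ⟨eq_equivalence, fun i => ?_⟩
        have hcl : cls ((· = ·) : TT κ → TT κ → Prop) i = {i} := by
          ext j
          simp [cls, eq_comm]
        rw [hcl, mk_singleton]
        exact one_le_aleph0.trans hκ
      · intro γ hγ i j
        have hγ0 : γ = 0 := le_antisymm hγ (zero_le (a := γ))
        rw [hγ0]
        exact id
    · have hβ : β < Order.succ β := Order.lt_succ β
      have hβα : β < (Order.succ κ).ord := hβ.trans hα
      obtain ⟨hgood, hmono⟩ := IH β hβ hβα
      have hstep := hnext _ hgood
      rw [EE_succ]
      refine ⟨hstep.1, ?_⟩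
      intro γ hγ i j hij
      rcases Order.le_succ_iff_eq_or_le.mp hγ with rfl | hγβ
      · rwa [EE_succ] at hij
      · exact hstep.2.1 i j (hmono γ hγβ i j hij)
    · have hEq := EE_limit (κ := κ) next hlim
      constructor
      · constructor
        · constructor
          · intro i
            rw [hEq]
            exact ⟨0, hlim.pos, by rw [EE_zero]⟩
          · intro i j hij
            rw [hEq] at hij ⊢
            obtain ⟨γ, hγ, h⟩ := hij
            exact ⟨γ, hγ, ((IH γ hγ (hγ.trans hα)).1.1).symm h⟩
          · intro i j k hij hjk
            rw [hEq] at hij hjk ⊢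
            obtain ⟨γ1, hγ1, h1⟩ := hij
            obtain ⟨γ2, hγ2, h2⟩ := hjk
            have hγ : max γ1 γ2 < α := max_lt hγ1 hγ2
            have hγord := hγ.trans hα
            have m1 := (IH _ hγ hγord).2 γ1 (le_max_left _ _) i j h1
            have m2 := (IH _ hγ hγord).2 γ2 (le_max_right _ _) j k h2
            exact ⟨max γ1 γ2, hγ, (IH _ hγ hγord).1.1.trans m1 m2⟩
        · intro i
          have hsub : cls (EE next α) i ⊆ ⋃ t : α.ToType, cls (EE next (tyin t)) i := by
            intro j hj
            have hj' : EE next α i j := hj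
            rw [hEq] at hj'
            obtain ⟨γ, hγ, h⟩ := hj'
            obtain ⟨t, ht⟩ := tyin_surj hγ
            exact mem_iUnion.mpr ⟨t, show EE next (tyin t) i j from ht ▸ h⟩
          refine (mk_le_mk_of_subset hsub).trans ((mk_iUnion_le'' _ κ ?_).trans ?_)
          · intro t
            exact (IH (tyin t) (tyin_lt t) ((tyin_lt t).trans hα)).1.2 i
          · rw [mk_toType]
            calc α.card * κ ≤ κ * κ := mul_le_mul_left (card_le_of_lt_ord hα) κ
              _ = κ := Cardinal.mul_eq_self hκ
      · intro γ hγ i j hij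
        rcases eq_or_lt_of_le hγ with rfl | hγα
        · exact hij
        · rw [hEq]
          exact ⟨γ, hγα, hij⟩


end Trans

section DDsec
variable {X : Type u} [TopologicalSpace X] {κ : Cardinal.{u}}

lemma seers_card_le (b : TT κ → Set X) (E : TT κ → TT κ → Prop) (x : X) :
    #(seers b E x) ≤ Order.succ κ := by
  calc #(seers b E x) ≤ #(TT κ) := mk_set_le _
    _ = Order.succ κ := mk_TT κ

lemma fold_subset_caPts (hκ : ℵ₀ ≤ κ) {B : Set X} {b : TT κ → Set X}
    (hbsub : ∀ t, b t ⊆ B) (hbcard : ∀ t, #(b t) = Order.succ κ)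
    (hB : #B = Order.succ κ) {E : TT κ → TT κ → Prop} (hE : GoodE κ E) :
    fold b E ⊆ caPts B := by
  intro x hx
  have hx' : #(seers b E x) = Order.succ κ := hx
  have hne : (seers b E x).Nonempty := by
    rw [← Set.nonempty_coe_sort, ← mk_ne_zero_iff, hx']
    intro h
    exact absurd (h ▸ κ.zero_le.trans_lt (Order.lt_succ κ)) (lt_irrefl _)
  obtain ⟨i, hi⟩ := hne
  exact caPts_piece_subset b hκ hbsub hbcard hE hB i hi

lemma seers_mono (hκ : ℵ₀ ≤ κ) {b : TT κ → Set X} (hbcard : ∀ t, #(b t) = Order.succ κ)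
    {E E' : TT κ → TT κ → Prop} (hE : GoodE κ E) (hE' : GoodE κ E')
    (hmono : ∀ i j, E i j → E' i j) (x : X) : seers b E x ⊆ seers b E' x := by
  intro i hi
  exact caPts_mono (piece_mono b hmono i)
    (by rw [piece_card b hκ hbcard hE' i, piece_card b hκ hbcard hE i]) hi

lemma DD_mono (hκ : ℵ₀ ≤ κ) {b : TT κ → Set X} (hbcard : ∀ t, #(b t) = Order.succ κ)
    {next : (TT κ → TT κ → Prop) → (TT κ → TT κ → Prop)} (hnext : nextSpec b next)
    {γ α : Ordinal.{u}} (hγα : γ ≤ α) (hα : α < (Order.succ κ).ord) :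
    fold b (EE next γ) ⊆ fold b (EE next α) := by
  intro x hx
  have hγord : γ < (Order.succ κ).ord := lt_of_le_of_lt hγα hα
  have hsub := seers_mono hκ hbcard (EE_good hκ hnext γ hγord).1 (EE_good hκ hnext α hα).1
    ((EE_good hκ hnext α hα).2 γ hγα) x
  have hx' : #(seers b (EE next γ) x) = Order.succ κ := hx
  exact le_antisymm (seers_card_le b _ x) (hx' ▸ mk_le_mk_of_subset hsub)

lemma DD_succ (hκ : ℵ₀ ≤ κ) {b : TT κ → Set X}
    {next : (TT κ → TT κ → Prop) → (TT κ → TT κ → Prop)} (hnext : nextSpec b next)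
    {α : Ordinal.{u}} (hα : α < (Order.succ κ).ord) :
    closure (fold b (EE next α)) ⊆ fold b (EE next (Order.succ α)) := by
  have hgood := (EE_good hκ hnext α hα).1
  obtain ⟨S, hScard, -, hSval⟩ := (hnext _ hgood).2.2
  intro x hx
  have hsub : S ⊆ seers b (EE next (Order.succ α)) x := by
    intro i hi
    show x ∈ caPts (piece b (EE next (Order.succ α)) i)
    rw [EE_succ]
    exact hSval i hi hx
  exact le_antisymm (seers_card_le b _ x) (hScard ▸ mk_le_mk_of_subset hsub)

lemma exists_stop (hκ : ℵ₀ ≤ κ) {B : Set X} {b : TT κ → Set X}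
    (hbsub : ∀ t, b t ⊆ B) (hbcard : ∀ t, #(b t) = Order.succ κ)
    (hB : #B = Order.succ κ) (hsmall : #(caPts B) ≤ κ)
    {next : (TT κ → TT κ → Prop) → (TT κ → TT κ → Prop)} (hnext : nextSpec b next) :
    ∃ α : Ordinal.{u}, α < (Order.succ κ).ord ∧
      fold b (EE next (Order.succ α)) ⊆ fold b (EE next α) := by
  by_contra hcon
  push_neg at hcon
  have hordlim := Cardinal.isSuccLimit_ord (hκ.trans (Order.le_succ κ))
  have hwit : ∀ t : TT κ, ∃ x, x ∈ fold b (EE next (Order.succ (tyin t))) ∧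
      x ∉ fold b (EE next (tyin t)) := by
    intro t
    obtain ⟨x, hx1, hx2⟩ := not_subset.mp (hcon (tyin t) (tyin_lt t))
    exact ⟨x, hx1, hx2⟩
  choose f hf1 hf2 using hwit
  have hmem : ∀ t, f t ∈ caPts B := by
    intro t
    have hlt : Order.succ (tyin t) < (Order.succ κ).ord := hordlim.succ_lt (tyin_lt t)
    exact fold_subset_caPts hκ hbsub hbcard hB (EE_good hκ hnext _ hlt).1 (hf1 t)
  have hginj : Function.Injective (fun t : TT κ => (⟨f t, hmem t⟩ : ↥(caPts B))) := by
    intro s t hst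
    by_contra hne
    have hfeq : f s = f t := congrArg Subtype.val hst
    rcases lt_or_gt_of_ne hne with h | h
    · have h1 : Order.succ (tyin s) ≤ tyin t := Order.succ_le_of_lt (tyin_lt_tyin.mpr h)
      have h2 : f s ∈ fold b (EE next (tyin t)) :=
        DD_mono hκ hbcard hnext h1 (tyin_lt t) (hf1 s)
      rw [hfeq] at h2
      exact hf2 t h2
    · have h1 : Order.succ (tyin t) ≤ tyin s := Order.succ_le_of_lt (tyin_lt_tyin.mpr h)
      have h2 : f t ∈ fold b (EE next (tyin s)) :=
        DD_mono hκ hbcard hnext h1 (tyin_lt s) (hf1 t)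
      rw [← hfeq] at h2
      exact hf2 s h2
  have hle := mk_le_of_injective hginj
  rw [mk_TT] at hle
  exact absurd (hle.trans hsmall) (not_le.mpr (Order.lt_succ κ))

lemma exists_base (hκ : ℵ₀ ≤ κ) {B : Set X} (hB : #B = Order.succ κ) :
    ∃ b : TT κ → Set X, (∀ t, b t ⊆ B) ∧ (∀ t, #(b t) = Order.succ κ) ∧
      Pairwise fun s t => Disjoint (b s) (b t) := by
  have hcard : #↥B = #(TT κ × TT κ) := by
    have hp : #(TT κ × TT κ) = #(TT κ) * #(TT κ) := by
      simp [mk_prod]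
    rw [hB, hp, mk_TT]
    exact (Cardinal.mul_eq_self (hκ.trans (Order.le_succ κ))).symm
  obtain ⟨e⟩ := Cardinal.eq.mp hcard
  refine ⟨fun t => Subtype.val '' {z : ↥B | (e z).1 = t}, ?_, ?_, ?_⟩
  · rintro t x ⟨z, _, rfl⟩
    exact z.2
  · intro t
    rw [mk_image_eq Subtype.val_injective]
    have hpre : {z : ↥B | (e z).1 = t} = e ⁻¹' ({t} ×ˢ (Set.univ : Set (TT κ))) := by
      ext z
      constructor
      · intro h
        exact Set.mem_prod.mpr ⟨h, mem_univ _⟩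
      · intro h
        exact (Set.mem_prod.mp h).1
    rw [hpre, ← Equiv.image_symm_eq_preimage, mk_image_eq e.symm.injective,
      Set.singleton_prod, mk_image_eq (fun a b h => ((Prod.mk.injEq _ _ _ _).mp h).2),
      mk_univ, mk_TT]
  · intro s t hst
    rw [Set.disjoint_left]
    rintro x ⟨z1, hz1, rfl⟩ ⟨z2, hz2, hz⟩
    have hzz : z2 = z1 := Subtype.val_injective hz
    rw [hzz] at hz2
    exact hst (hz1.symm.trans hz2)

/-- THE CORE LEMMA: no `κ⁺`-sized set has a small set of complete accumulation points. -/
lemma core (hκ : ℵ₀ ≤ κ) (hcomp : LamCompactSpace X (Order.succ κ))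
    (hnoapp : ∀ H : Set X, ¬ IsKApproximated (Order.succ κ) H)
    {B : Set X} (hB : #B = Order.succ κ) : ¬ (#(caPts B) ≤ κ) := by
  intro hsmall
  obtain ⟨b, hbsub, hbcard, hbdisj⟩ := exists_base hκ hB
  obtain ⟨next, hnext⟩ := exists_next hκ b hbsub hbcard hB hsmall
  obtain ⟨α, hα, hstop⟩ := exists_stop hκ hbsub hbcard hB hsmall hnext
  have hsucc : Order.succ α < (Order.succ κ).ord :=
    (Cardinal.isSuccLimit_ord (hκ.trans (Order.le_succ κ))).succ_lt hα
  have hgoodα := (EE_good hκ hnext α hα).1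
  have hgood' := (EE_good hκ hnext (Order.succ α) hsucc).1
  have hEs : next (EE next α) = EE next (Order.succ α) := (EE_succ next α).symm
  set E' := EE next (Order.succ α) with hE'def
  set D := fold b (EE next α) with hDdef
  have hDeq : fold b E' = D :=
    Subset.antisymm hstop (DD_mono hκ hbcard hnext (Order.le_succ α) hsucc)
  have hDclosed : closure D = D := by
    refine Subset.antisymm ?_ subset_closure
    exact (DD_succ hκ hnext hα).trans hstop
  obtain ⟨S, hScard, hSunrel, hSval⟩ := (hnext _ hgoodα).2.2
  simp only [hEs] at hSunrel hSval
  have hval' : ∀ i ∈ S, D ⊆ caPts (piece b E' i) := by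
    intro i hi
    have h1 := hSval i hi
    rw [hDclosed] at h1
    exact h1
  set S' := {i ∈ S | caPts (piece b E' i) ⊆ D} with hS'def
  have hbad : S \ S' ⊆ ⋃ x : ↥(caPts B \ D), {i | (x : X) ∈ caPts (piece b E' i)} := by
    rintro i ⟨hiS, hiS'⟩
    have hns : ¬ caPts (piece b E' i) ⊆ D := fun h => hiS' ⟨hiS, h⟩
    obtain ⟨x, hx1, hx2⟩ := not_subset.mp hns
    have hxB : x ∈ caPts B := caPts_piece_subset b hκ hbsub hbcard hgood' hB i hx1
    exact mem_iUnion.mpr ⟨⟨x, hxB, hx2⟩, hx1⟩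
  have hbadcard : #↥(S \ S') ≤ κ := by
    refine (mk_le_mk_of_subset hbad).trans ((mk_iUnion_le'' _ κ ?_).trans ?_)
    · rintro ⟨x, hx⟩
      have hxn : x ∉ fold b E' := by rw [hDeq]; exact hx.2
      have hne : #(seers b E' x) ≠ Order.succ κ := hxn
      exact le_kappa_of_lt_succ hκ (seers_card_le b E' x) hne
    · calc #↥(caPts B \ D) * κ ≤ κ * κ :=
          mul_le_mul_left ((mk_le_mk_of_subset diff_subset).trans hsmall) κ
        _ = κ := Cardinal.mul_eq_self hκ
  have hS'card : #↥S' = Order.succ κ := by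
    have hsub : S ⊆ S' ∪ (S \ S') := by
      intro i hi
      by_cases h : i ∈ S'
      · exact Or.inl h
      · exact Or.inr ⟨hi, h⟩
    have h1 : Order.succ κ ≤ #↥S' + #↥(S \ S') :=
      hScard ▸ (mk_le_mk_of_subset hsub).trans (mk_union_le _ _)
    by_contra hne
    have hle : #↥S' ≤ κ :=
      le_kappa_of_lt_succ hκ ((mk_le_mk_of_subset (fun i hi => hi.1)).trans hScard.le) hne
    have h2 : Order.succ κ ≤ κ + κ := h1.trans (add_le_add hle hbadcard)
    rw [Cardinal.add_eq_self hκ] at h2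
    exact absurd h2 (not_le.mpr (Order.lt_succ κ))
  have hvals : ∀ i ∈ S', caPts (piece b E' i) = D := fun i hi =>
    Subset.antisymm hi.2 (hval' i hi.1)
  have hinj : InjOn (fun i => piece b E' i) S' := by
    intro i hi j hj hij
    by_contra hne
    have hdis := piece_disjoint b hbdisj hgood'.1 (hSunrel i hi.1 j hj.1 hne)
    simp only at hij
    rw [hij] at hdis
    rw [disjoint_self] at hdis
    have hnonempty := piece_nonempty b hκ hbcard hgood' j
    rw [Set.nonempty_iff_ne_empty] at hnonempty
    exact hnonempty hdis
  refine hnoapp D ⟨(fun i => piece b E' i) '' S', ?_, ?_, ?_⟩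
  · rw [mk_image_eq_of_injOn _ _ hinj, hS'card]
  · intro A1 hA1 A2 hA2 hne
    obtain ⟨i, hi, rfl⟩ := hA1
    obtain ⟨j, hj, rfl⟩ := hA2
    have hij : i ≠ j := fun h => hne (by rw [h])
    exact piece_disjoint b hbdisj hgood'.1 (hSunrel i hi.1 j hj.1 hij)
  · rintro A ⟨i, hi, rfl⟩
    exact ⟨piece_card b hκ hbcard hgood' i, fun Y _ hY => hcomp Y hY, hvals i hi⟩


end DDsec

end S18

/-- If `X` is a regular `κ⁺`-compact space with `|X| = Δ(X) = κ⁺` having no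
`κ⁺`-approximated subset, then for every `A ∈ [X]^{κ⁺}` the subspace `A°` is a regular
`κ⁺`-compact space with `|A°| = Δ(A°) = κ⁺`. -/
theorem stmt18 {X : Type u} [TopologicalSpace X] [RegularSpace X] (κ : Cardinal.{u})
    (hκ : ℵ₀ ≤ κ) (hcomp : LamCompactSpace X (Order.succ κ))
    (hcard : #X = Order.succ κ) (hdisp : dispersion X = Order.succ κ)
    (hnoapp : ∀ H : Set X, ¬ IsKApproximated (Order.succ κ) H) :
    ∀ A : Set X, #A = Order.succ κ →
      RegularSpace ↥(caPts A) ∧ LamCompactSpace ↥(caPts A) (Order.succ κ) ∧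
      #(↥(caPts A)) = Order.succ κ ∧ dispersion ↥(caPts A) = Order.succ κ := by
  intro A hA
  have hK0 : Order.succ κ ≠ 0 := S18.succ_ne_zero' κ
  have hcard3 : #(↥(caPts A)) = Order.succ κ := by
    refine le_antisymm ?_ ?_
    · calc #↥(caPts A) ≤ #X := mk_set_le _
        _ = Order.succ κ := hcard
    · have hc := S18.core hκ hcomp hnoapp hA
      rw [not_le] at hc
      exact Order.succ_le_of_lt hc
  refine ⟨inferInstance, ?_, hcard3, ?_⟩
  · -- the subspace is κ⁺-compact
    intro A' hA'
    have hYcard : #↥(Subtype.val '' A') = Order.succ κ := by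
      rw [mk_image_eq Subtype.val_injective, hA']
    obtain ⟨y, hy⟩ := hcomp (Subtype.val '' A') hYcard
    have hyCA : y ∈ caPts A := by
      have h1 : y ∈ closure (Subtype.val '' A') :=
        S18.caPts_subset_closure (by rw [hYcard]; exact hK0) hy
      have h2 : closure (Subtype.val '' A') ⊆ caPts A :=
        closure_minimal (by rintro _ ⟨z, _, rfl⟩; exact z.2) (S18.isClosed_caPts A)
      exact h2 h1
    refine ⟨⟨y, hyCA⟩, ?_⟩
    intro U hU hyU
    obtain ⟨V, hV, rfl⟩ := isOpen_induced_iff.mp hU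
    have hyV : y ∈ V := hyU
    have him : Subtype.val '' ((Subtype.val ⁻¹' V) ∩ A') = V ∩ (Subtype.val '' A') := by
      ext x
      constructor
      · rintro ⟨z, ⟨hzV, hzA⟩, rfl⟩
        exact ⟨hzV, mem_image_of_mem _ hzA⟩
      · rintro ⟨hxV, ⟨z, hzA, rfl⟩⟩
        exact ⟨z, ⟨hxV, hzA⟩, rfl⟩
    calc #↥((Subtype.val ⁻¹' V) ∩ A') = #↥(V ∩ (Subtype.val '' A')) := by
          rw [← him, mk_image_eq Subtype.val_injective]
      _ = #↥(Subtype.val '' A') := hy V hV hyV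
      _ = Order.succ κ := hYcard
      _ = #↥A' := hA'.symm
  · -- dispersion of the subspace
    have hloc : ∀ V : Set X, IsOpen V → ∀ x, x ∈ V ∩ caPts A →
        Order.succ κ ≤ #↥(V ∩ caPts A) := by
      intro V hV x hx
      obtain ⟨C, ⟨hC1, hC2⟩, hC3⟩ := (closed_nhds_basis x).mem_iff.mp (hV.mem_nhds hx.1)
      have hxW : x ∈ interior C := mem_interior_iff_mem_nhds.mpr hC1
      have hWV : closure (interior C) ⊆ V := (closure_minimal interior_subset hC2).trans hC3
      have hBcard : #↥(interior C ∩ A) = Order.succ κ := by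
        rw [hx.2 (interior C) isOpen_interior hxW, hA]
      have hsub : caPts (interior C ∩ A) ⊆ V ∩ caPts A := by
        intro z hz
        constructor
        · have h1 : z ∈ closure (interior C ∩ A) :=
            S18.caPts_subset_closure (by rw [hBcard]; exact hK0) hz
          exact hWV (closure_mono inter_subset_left h1)
        · exact S18.caPts_mono inter_subset_right (by rw [hA, hBcard]) hz
      have hge := S18.core hκ hcomp hnoapp hBcard
      rw [not_le] at hge
      exact (Order.succ_le_of_lt hge).trans (mk_le_mk_of_subset hsub)
    have hset : {c : Cardinal.{u} | ∃ U : Set ↥(caPts A), IsOpen U ∧ U.Nonempty ∧ c = #↥U}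
        = {Order.succ κ} := by
      ext c
      constructor
      · rintro ⟨U, hU, hUne, rfl⟩
        obtain ⟨V, hV, rfl⟩ := isOpen_induced_iff.mp hU
        obtain ⟨⟨x, hxCA⟩, hxU⟩ := hUne
        have hxV : x ∈ V := hxU
        have him : Subtype.val '' (Subtype.val ⁻¹' V : Set ↥(caPts A)) = caPts A ∩ V :=
          Subtype.image_preimage_coe _ _
        have hcardU : #↥(Subtype.val ⁻¹' V : Set ↥(caPts A)) = #↥(V ∩ caPts A) := by
          rw [← mk_image_eq (f := (Subtype.val : ↥(caPts A) → X)) Subtype.val_injective,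
            him, inter_comm]
        rw [mem_singleton_iff, hcardU]
        refine le_antisymm ?_ (hloc V hV x ⟨hxV, hxCA⟩)
        calc #↥(V ∩ caPts A) ≤ #X := mk_set_le _
          _ = Order.succ κ := hcard
      · intro hc
        rw [mem_singleton_iff] at hc
        subst hc
        refine ⟨Set.univ, isOpen_univ, ?_, ?_⟩
        · obtain ⟨x, hx⟩ := hcomp A hA
          exact ⟨⟨x, hx⟩, mem_univ _⟩
        · rw [mk_univ, hcard3]
    rw [dispersion, hset, csInf_singleton]
end
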